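/- arXiv:1703.01266 — 13 statements merged into one kernel-verified Lean document; each statement's English description precedes it below -/
import Mathlib

section
/- The asymmetry weight is convex: for all density matrices ρ₁, ρ₂ on ℂ^d and every p ∈ [0,1], A_w(pρ₁ + (1−p)ρ₂) ≤ p·A_w(ρ₁) + (1−p)·A_w(ρ₂). -/
open Matrix BigOperators
open scoped ComplexOrder

noncomputable section

/-- A density matrix: positive semidefinite with unit trace. -/
def IsDensity {n : Type*} [Fintype n] (ρ : Matrix n n ℂ) : Prop :=
  ρ.PosSemidef ∧ ρ.trace = 1

/-- A state is symmetric w.r.t. the representation `U` if it is invariant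
under conjugation by every `U g`. -/
def IsSymmetricState {d : ℕ} {G : Type*} [Group G]
    (U : G → Matrix (Fin d) (Fin d) ℂ) (σ : Matrix (Fin d) (Fin d) ℂ) : Prop :=
  ∀ g : G, U g * σ * (U g)ᴴ = σ

/-- The asymmetry weight of a state `ρ`. -/
noncomputable def asymWeight {d : ℕ} {G : Type*} [Group G]
    (U : G → Matrix (Fin d) (Fin d) ℂ) (ρ : Matrix (Fin d) (Fin d) ℂ) : ℝ :=
  sInf {s : ℝ | s ∈ Set.Icc (0 : ℝ) 1 ∧
    ∃ σ τ : Matrix (Fin d) (Fin d) ℂ,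
      IsDensity σ ∧ IsSymmetricState U σ ∧ IsDensity τ ∧
      ρ = (1 - s) • σ + s • τ}

namespace AsymAux

lemma posSemidef_add {n : Type*} [Fintype n] {A B : Matrix n n ℂ}
    (hA : A.PosSemidef) (hB : B.PosSemidef) : (A + B).PosSemidef := by
  refine PosSemidef.of_dotProduct_mulVec_nonneg (hA.1.add hB.1) (fun x => ?_)
  simp only [add_mulVec, dotProduct_add]
  exact add_nonneg (hA.dotProduct_mulVec_nonneg x) (hB.dotProduct_mulVec_nonneg x)

lemma posSemidef_smul {n : Type*} [Fintype n] {A : Matrix n n ℂ} {r : ℝ}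
    (hA : A.PosSemidef) (hr : 0 ≤ r) : (r • A).PosSemidef := by
  refine PosSemidef.of_dotProduct_mulVec_nonneg ?_ (fun x => ?_)
  · unfold Matrix.IsHermitian
    rw [conjTranspose_smul]
    simp [hA.1.eq]
  · rw [smul_mulVec, dotProduct_smul]
    have : (r : ℂ) • (star x ⬝ᵥ A *ᵥ x) = (r : ℂ) * (star x ⬝ᵥ A *ᵥ x) := rfl
    rw [show r • (star x ⬝ᵥ A *ᵥ x) = (r : ℂ) * (star x ⬝ᵥ A *ᵥ x) by
      rw [Complex.real_smul]]
    exact mul_nonneg (by exact_mod_cast hr) (hA.dotProduct_mulVec_nonneg x)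

lemma isDensity_combo {n : Type*} [Fintype n] {A B : Matrix n n ℂ} {a b : ℝ}
    (hA : IsDensity A) (hB : IsDensity B) (ha : 0 ≤ a) (hb : 0 ≤ b) (hab : a + b = 1) :
    IsDensity (a • A + b • B) := by
  refine ⟨posSemidef_add (posSemidef_smul hA.1 ha) (posSemidef_smul hB.1 hb), ?_⟩
  rw [trace_add, trace_smul, trace_smul, hA.2, hB.2]
  simp only [Complex.real_smul, mul_one]
  exact_mod_cast hab

lemma isSymm_combo {d : ℕ} {G : Type*} [Group G]
    {U : G → Matrix (Fin d) (Fin d) ℂ} {A B : Matrix (Fin d) (Fin d) ℂ} {a b : ℝ}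
    (hA : IsSymmetricState U A) (hB : IsSymmetricState U B) :
    IsSymmetricState U (a • A + b • B) := by
  intro g
  rw [mul_add, add_mul, mul_smul_comm, mul_smul_comm, smul_mul_assoc, smul_mul_assoc,
    hA g, hB g]

/-- Key step: combining decompositions. -/
lemma mem_combo {d : ℕ} {G : Type*} [Group G]
    (U : G → Matrix (Fin d) (Fin d) ℂ)
    (ρ₁ ρ₂ : Matrix (Fin d) (Fin d) ℂ)
    {p s₁ s₂ : ℝ} (hp : p ∈ Set.Icc (0 : ℝ) 1)
    (h₁ : s₁ ∈ {s : ℝ | s ∈ Set.Icc (0 : ℝ) 1 ∧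
      ∃ σ τ : Matrix (Fin d) (Fin d) ℂ,
        IsDensity σ ∧ IsSymmetricState U σ ∧ IsDensity τ ∧
        ρ₁ = (1 - s) • σ + s • τ})
    (h₂ : s₂ ∈ {s : ℝ | s ∈ Set.Icc (0 : ℝ) 1 ∧
      ∃ σ τ : Matrix (Fin d) (Fin d) ℂ,
        IsDensity σ ∧ IsSymmetricState U σ ∧ IsDensity τ ∧
        ρ₂ = (1 - s) • σ + s • τ}) :
    p * s₁ + (1 - p) * s₂ ∈ {s : ℝ | s ∈ Set.Icc (0 : ℝ) 1 ∧
      ∃ σ τ : Matrix (Fin d) (Fin d) ℂ,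
        IsDensity σ ∧ IsSymmetricState U σ ∧ IsDensity τ ∧
        p • ρ₁ + (1 - p) • ρ₂ = (1 - s) • σ + s • τ} := by
  obtain ⟨hp0, hp1⟩ := hp
  obtain ⟨⟨hs₁0, hs₁1⟩, σ₁, τ₁, hσ₁, hσ₁s, hτ₁, hd₁⟩ := h₁
  obtain ⟨⟨hs₂0, hs₂1⟩, σ₂, τ₂, hσ₂, hσ₂s, hτ₂, hd₂⟩ := h₂
  set s : ℝ := p * s₁ + (1 - p) * s₂ with hs_def
  have hq0 : 0 ≤ 1 - p := by linarith
  have hs0 : 0 ≤ s := add_nonneg (mul_nonneg hp0 hs₁0) (mul_nonneg hq0 hs₂0)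
  have hs1 : s ≤ 1 := by nlinarith
  have ha0 : 0 ≤ p * (1 - s₁) := mul_nonneg hp0 (by linarith)
  have hb0 : 0 ≤ (1 - p) * (1 - s₂) := mul_nonneg hq0 (by linarith)
  have hc0 : 0 ≤ p * s₁ := mul_nonneg hp0 hs₁0
  have he0 : 0 ≤ (1 - p) * s₂ := mul_nonneg hq0 hs₂0
  have hab : p * (1 - s₁) + (1 - p) * (1 - s₂) = 1 - s := by ring
  have hce : p * s₁ + (1 - p) * s₂ = s := rfl
  -- define σ and τ
  by_cases hseq1 : s = 1
  · -- 1 - s = 0, so p*(1-s₁) = 0 and (1-p)*(1-s₂) = 0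
    have hA : p * (1 - s₁) = 0 := by nlinarith [hab]
    have hB : (1 - p) * (1 - s₂) = 0 := by nlinarith [hab]
    refine ⟨⟨hs0, hs1⟩, σ₁, (p * s₁) • τ₁ + ((1 - p) * s₂) • τ₂, hσ₁, hσ₁s,
      isDensity_combo hτ₁ hτ₂ hc0 he0 (by rw [hce, hseq1]), ?_⟩
    rw [hd₁, hd₂, hseq1]
    simp only [sub_self, zero_smul, one_smul, zero_add]
    rw [smul_add, smul_add, smul_smul, smul_smul, smul_smul, smul_smul, hA, hB]
    simp
  · have hslt1 : s < 1 := lt_of_le_of_ne hs1 hseq1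
    have h1s : 0 < 1 - s := by linarith
    by_cases hseq0 : s = 0
    · have hC : p * s₁ = 0 := by nlinarith
      have hE : (1 - p) * s₂ = 0 := by nlinarith
      refine ⟨⟨hs0, hs1⟩, (p * (1 - s₁)) • σ₁ + ((1 - p) * (1 - s₂)) • σ₂, τ₁,
        isDensity_combo hσ₁ hσ₂ ha0 hb0 (by rw [hab, hseq0]; ring),
        isSymm_combo hσ₁s hσ₂s, hτ₁, ?_⟩
      rw [hd₁, hd₂, hseq0]
      simp only [sub_zero, one_smul, zero_smul, add_zero]
      rw [smul_add, smul_add, smul_smul, smul_smul, smul_smul, smul_smul, hC, hE]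
      simp
    · have hsgt0 : 0 < s := lt_of_le_of_ne hs0 (Ne.symm hseq0)
      refine ⟨⟨hs0, hs1⟩,
        ((1 - s)⁻¹ * (p * (1 - s₁))) • σ₁ + ((1 - s)⁻¹ * ((1 - p) * (1 - s₂))) • σ₂,
        (s⁻¹ * (p * s₁)) • τ₁ + (s⁻¹ * ((1 - p) * s₂)) • τ₂,
        isDensity_combo hσ₁ hσ₂ (mul_nonneg (by positivity) ha0)
          (mul_nonneg (by positivity) hb0)
          (by rw [← mul_add, hab]; field_simp),
        isSymm_combo hσ₁s hσ₂s,
        isDensity_combo hτ₁ hτ₂ (mul_nonneg (by positivity) hc0)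
          (mul_nonneg (by positivity) he0)
          (by rw [← mul_add, hce]; field_simp), ?_⟩
      rw [hd₁, hd₂]
      rw [smul_add, smul_add, smul_add, smul_add]
      simp only [smul_smul]
      rw [show (1 - s) * ((1 - s)⁻¹ * (p * (1 - s₁))) = p * (1 - s₁) by
            field_simp,
          show (1 - s) * ((1 - s)⁻¹ * ((1 - p) * (1 - s₂))) = (1 - p) * (1 - s₂) by
            field_simp,
          show s * (s⁻¹ * (p * s₁)) = p * s₁ by field_simp,
          show s * (s⁻¹ * ((1 - p) * s₂)) = (1 - p) * s₂ by field_simp]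
      module

end AsymAux

theorem asymWeight_convex
    {d : ℕ} {G : Type*} [Group G] [Fintype G]
    (U : G → Matrix (Fin d) (Fin d) ℂ)
    (hU : ∀ g, U g ∈ Matrix.unitaryGroup (Fin d) ℂ)
    (hUhom : ∀ g₁ g₂, U (g₁ * g₂) = U g₁ * U g₂)
    (ρ₁ ρ₂ : Matrix (Fin d) (Fin d) ℂ) (hρ₁ : IsDensity ρ₁) (hρ₂ : IsDensity ρ₂)
    (p : ℝ) (hp : p ∈ Set.Icc (0 : ℝ) 1) :
    asymWeight U (p • ρ₁ + (1 - p) • ρ₂) ≤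
      p * asymWeight U ρ₁ + (1 - p) * asymWeight U ρ₂ := by
  classical
  -- the group average of a density matrix is a symmetric density matrix
  have avg : ∀ ρ : Matrix (Fin d) (Fin d) ℂ, IsDensity ρ →
      ∃ σ : Matrix (Fin d) (Fin d) ℂ, IsDensity σ ∧ IsSymmetricState U σ := by
    intro ρ hρ
    set c : ℝ := ((Fintype.card G : ℝ))⁻¹ with hc
    have hcard : (0 : ℝ) < (Fintype.card G : ℝ) := by
      exact_mod_cast Fintype.card_pos
    refine ⟨c • ∑ g : G, U g * ρ * (U g)ᴴ, ⟨?_, ?_⟩, ?_⟩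
    · refine AsymAux.posSemidef_smul ?_ (by positivity)
      -- sum of PSD is PSD
      have : ∀ g : G, (U g * ρ * (U g)ᴴ).PosSemidef := fun g =>
        hρ.1.mul_mul_conjTranspose_same (U g)
      refine Finset.sum_induction _ _ (fun a b ha hb => AsymAux.posSemidef_add ha hb)
        Matrix.PosSemidef.zero (fun g _ => this g)
    · rw [trace_smul, trace_sum]
      have htr : ∀ g : G, (U g * ρ * (U g)ᴴ).trace = 1 := by
        intro g
        rw [trace_mul_cycle]
        have hu : (U g)ᴴ * U g = 1 := (Matrix.mem_unitaryGroup_iff'.mp (hU g))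
        rw [hu, one_mul, hρ.2]
      simp only [htr, Finset.sum_const, Finset.card_univ, nsmul_eq_mul, mul_one]
      rw [hc, Complex.real_smul]
      push_cast
      field_simp
    · intro h
      rw [mul_smul_comm, smul_mul_assoc, Finset.mul_sum, Finset.sum_mul]
      congr 1
      have key : ∀ g : G, U h * (U g * ρ * (U g)ᴴ) * (U h)ᴴ
          = U (h * g) * ρ * (U (h * g))ᴴ := by
        intro g
        rw [hUhom h g, conjTranspose_mul]
        noncomm_ring
      calc ∑ g : G, U h * (U g * ρ * (U g)ᴴ) * (U h)ᴴ
          = ∑ g : G, U (h * g) * ρ * (U (h * g))ᴴ := by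
            exact Finset.sum_congr rfl (fun g _ => key g)
        _ = ∑ g : G, U g * ρ * (U g)ᴴ := by
            exact Fintype.sum_equiv (Equiv.mulLeft h) _ _ (fun g => rfl)
  obtain ⟨σ₀, hσ₀, hσ₀s⟩ := avg ρ₁ hρ₁
  -- the admissible sets
  set S₁ := {s : ℝ | s ∈ Set.Icc (0 : ℝ) 1 ∧
    ∃ σ τ : Matrix (Fin d) (Fin d) ℂ,
      IsDensity σ ∧ IsSymmetricState U σ ∧ IsDensity τ ∧
      ρ₁ = (1 - s) • σ + s • τ} with hS₁
  set S₂ := {s : ℝ | s ∈ Set.Icc (0 : ℝ) 1 ∧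
    ∃ σ τ : Matrix (Fin d) (Fin d) ℂ,
      IsDensity σ ∧ IsSymmetricState U σ ∧ IsDensity τ ∧
      ρ₂ = (1 - s) • σ + s • τ} with hS₂
  set S := {s : ℝ | s ∈ Set.Icc (0 : ℝ) 1 ∧
    ∃ σ τ : Matrix (Fin d) (Fin d) ℂ,
      IsDensity σ ∧ IsSymmetricState U σ ∧ IsDensity τ ∧
      p • ρ₁ + (1 - p) • ρ₂ = (1 - s) • σ + s • τ} with hS
  have hS₁ne : S₁.Nonempty := ⟨1, ⟨by norm_num, σ₀, ρ₁, hσ₀, hσ₀s, hρ₁, by simp⟩⟩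
  have hS₂ne : S₂.Nonempty := ⟨1, ⟨by norm_num, σ₀, ρ₂, hσ₀, hσ₀s, hρ₂, by simp⟩⟩
  have hSbdd : BddBelow S := ⟨0, fun s hs => hs.1.1⟩
  have hcombo : ∀ s₁ ∈ S₁, ∀ s₂ ∈ S₂, p * s₁ + (1 - p) * s₂ ∈ S := by
    intro s₁ h₁ s₂ h₂
    exact AsymAux.mem_combo U ρ₁ ρ₂ hp h₁ h₂
  have key : asymWeight U (p • ρ₁ + (1 - p) • ρ₂) = sInf S := rfl
  rw [key]
  have h₁eq : asymWeight U ρ₁ = sInf S₁ := rfl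
  have h₂eq : asymWeight U ρ₂ = sInf S₂ := rfl
  rw [h₁eq, h₂eq]
  refine le_of_forall_pos_le_add (fun ε hε => ?_)
  obtain ⟨s₁, hs₁, hs₁lt⟩ := Real.lt_sInf_add_pos hS₁ne (half_pos hε)
  obtain ⟨s₂, hs₂, hs₂lt⟩ := Real.lt_sInf_add_pos hS₂ne (half_pos hε)
  have hmem := hcombo s₁ hs₁ s₂ hs₂
  have hle : sInf S ≤ p * s₁ + (1 - p) * s₂ := csInf_le hSbdd hmem
  have hp0 : 0 ≤ p := hp.1
  have hq0 : 0 ≤ 1 - p := by linarith [hp.2]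
  nlinarith [mul_le_mul_of_nonneg_left hs₁lt.le hp0,
    mul_le_mul_of_nonneg_left hs₂lt.le hq0]
end
end

section
/- Let {K_i}_{i∈I} (I finite) be d×d complex matrices with Σ_i K_i† K_i = I, and suppose each suboperation Φ_i(X) = K_i X K_i† commutes with the group action, i.e., K_i (U_g X U_g†) K_i† = U_g (K_i X K_i†) U_g† for every matrix X, every i and every g ∈ G. Then for every density matrix ρ, A_w(ρ) ≥ Σ_{i : p_i > 0} p_i · A_w(ρ_i), where p_i = Tr(K_i ρ K_i†) and ρ_i = K_i ρ K_i† / p_i. -/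
open Matrix BigOperators
open scoped ComplexOrder

noncomputable section

/-! ### Auxiliary lemmas -/

private lemma aux_psd_diag_nonneg {n : Type*} [Fintype n] [DecidableEq n]
    {M : Matrix n n ℂ} (hM : M.PosSemidef) (i : n) : 0 ≤ M i i := by
  have := hM.dotProduct_mulVec_nonneg (Pi.single i 1)
  simpa [dotProduct, Pi.single_apply, apply_ite] using this

private lemma aux_psd_trace_nonneg {n : Type*} [Fintype n] [DecidableEq n]
    {M : Matrix n n ℂ} (hM : M.PosSemidef) : 0 ≤ M.trace :=
  Finset.sum_nonneg fun i _ => aux_psd_diag_nonneg hM i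

private lemma aux_psd_trace_re_nonneg {n : Type*} [Fintype n] [DecidableEq n]
    {M : Matrix n n ℂ} (hM : M.PosSemidef) : 0 ≤ M.trace.re :=
  (Complex.nonneg_iff.mp (aux_psd_trace_nonneg hM)).1

private lemma aux_psd_trace_eq {n : Type*} [Fintype n] [DecidableEq n]
    {M : Matrix n n ℂ} (hM : M.PosSemidef) : M.trace = ((M.trace.re : ℝ) : ℂ) :=
  Complex.ext rfl
    (by simpa using ((Complex.nonneg_iff.mp (aux_psd_trace_nonneg hM)).2).symm)

private lemma aux_psd_trace_zero {n : Type*} [Fintype n] [DecidableEq n]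
    {M : Matrix n n ℂ} (hM : M.PosSemidef) (h : M.trace = 0) : M = 0 := by
  obtain ⟨B, rfl⟩ : ∃ B : Matrix n n ℂ, M = Bᴴ * B := by
    open scoped MatrixOrder in exact CStarAlgebra.nonneg_iff_eq_star_mul_self.mp hM.nonneg
  rw [Matrix.trace] at h
  have hz : ∀ j, (Bᴴ * B).diag j = 0 := by
    intro j
    have hnn : ∀ j ∈ Finset.univ, (0:ℂ) ≤ (Bᴴ * B).diag j := by
      intro j _
      simpa [Matrix.diag, dotProduct, Pi.single_apply, apply_ite] using
        (posSemidef_conjTranspose_mul_self B).dotProduct_mulVec_nonneg (Pi.single j 1)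
    exact (Finset.sum_eq_zero_iff_of_nonneg hnn).mp h j (Finset.mem_univ j)
  suffices hB : B = 0 by simp [hB]
  ext i j
  have := hz j
  simp only [Matrix.diag, Matrix.mul_apply, Matrix.conjTranspose_apply] at this
  have h2 : ∀ k ∈ Finset.univ, (0:ℂ) ≤ star (B k j) * B k j :=
    fun k _ => star_mul_self_nonneg _
  have := (Finset.sum_eq_zero_iff_of_nonneg h2).mp this i (Finset.mem_univ i)
  simpa [mul_comm, Complex.mul_conj] using this

private lemma aux_psd_smul {n : Type*} [Fintype n] {c : ℝ} (hc : 0 ≤ c)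
    {M : Matrix n n ℂ} (hM : M.PosSemidef) : (c • M).PosSemidef := by
  have h : c • M = ((c:ℂ)) • M := by ext i j; simp [Complex.real_smul]
  rw [h]
  refine posSemidef_iff_dotProduct_mulVec.mpr ⟨?_, ?_⟩
  · show ((c:ℂ) • M)ᴴ = _
    rw [Matrix.conjTranspose_smul, Complex.star_def, Complex.conj_ofReal, hM.1.eq]
  · intro x
    rw [smul_mulVec, dotProduct_smul]
    exact smul_nonneg (by exact_mod_cast hc) (hM.dotProduct_mulVec_nonneg x)

private lemma aux_asymWeight_le {d : ℕ} {G : Type*} [Group G]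
    (U : G → Matrix (Fin d) (Fin d) ℂ) (ρ : Matrix (Fin d) (Fin d) ℂ) {t : ℝ}
    (ht : t ∈ Set.Icc (0:ℝ) 1)
    (h : ∃ σ τ : Matrix (Fin d) (Fin d) ℂ,
      IsDensity σ ∧ IsSymmetricState U σ ∧ IsDensity τ ∧ ρ = (1 - t) • σ + t • τ) :
    asymWeight U ρ ≤ t :=
  csInf_le ⟨0, fun _ hx => hx.1.1⟩ ⟨ht, h⟩

private lemma aux_le_asymWeight {d : ℕ} {G : Type*} [Group G]
    (U : G → Matrix (Fin d) (Fin d) ℂ) (ρ : Matrix (Fin d) (Fin d) ℂ) {a : ℝ}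
    (hne : ∃ t : ℝ, t ∈ Set.Icc (0:ℝ) 1 ∧
      ∃ σ τ : Matrix (Fin d) (Fin d) ℂ,
        IsDensity σ ∧ IsSymmetricState U σ ∧ IsDensity τ ∧ ρ = (1 - t) • σ + t • τ)
    (h : ∀ t : ℝ, t ∈ Set.Icc (0:ℝ) 1 →
      ∀ σ τ : Matrix (Fin d) (Fin d) ℂ,
        IsDensity σ → IsSymmetricState U σ → IsDensity τ →
        ρ = (1 - t) • σ + t • τ → a ≤ t) :
    a ≤ asymWeight U ρ := by
  refine le_csInf ?_ ?_
  · obtain ⟨t, ht, hh⟩ := hne; exact ⟨t, ht, hh⟩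
  · rintro b ⟨hb, σ, τ, hσ, hsym, hτ, hdec⟩
    exact h b hb σ τ hσ hsym hτ hdec

theorem asymWeight_monotone_selective_covariant
    {d : ℕ} {G : Type*} [Group G] [Fintype G]
    (U : G → Matrix (Fin d) (Fin d) ℂ)
    (hU : ∀ g, U g ∈ Matrix.unitaryGroup (Fin d) ℂ)
    (hUhom : ∀ g₁ g₂, U (g₁ * g₂) = U g₁ * U g₂)
    {ι : Type*} [Fintype ι] (K : ι → Matrix (Fin d) (Fin d) ℂ)
    (hK : ∑ i : ι, (K i)ᴴ * K i = 1)
    (hcov : ∀ (i : ι) (g : G) (X : Matrix (Fin d) (Fin d) ℂ),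
      K i * (U g * X * (U g)ᴴ) * (K i)ᴴ = U g * (K i * X * (K i)ᴴ) * (U g)ᴴ)
    (ρ : Matrix (Fin d) (Fin d) ℂ) (hρ : IsDensity ρ) :
    ∑ i ∈ Finset.univ.filter
        (fun i : ι => 0 < ((K i * ρ * (K i)ᴴ).trace).re),
      ((K i * ρ * (K i)ᴴ).trace).re *
        asymWeight U ((((K i * ρ * (K i)ᴴ).trace).re)⁻¹ • (K i * ρ * (K i)ᴴ))
      ≤ asymWeight U ρ := by
  -- d is positive
  have hd : 0 < d := by
    rcases Nat.eq_zero_or_pos d with h0 | h; swap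
    · exact h
    · exfalso
      subst h0
      have := hρ.2
      rw [Matrix.trace_eq_zero_of_isEmpty] at this
      simp at this
  -- the maximally mixed state
  set σ₀ : Matrix (Fin d) (Fin d) ℂ := ((d:ℝ)⁻¹) • 1 with hσ₀_def
  have hσ₀ : IsDensity σ₀ := by
    constructor
    · exact aux_psd_smul (by positivity) Matrix.PosSemidef.one
    · rw [hσ₀_def, Matrix.trace_smul, Matrix.trace_one]
      simp
      exact inv_mul_cancel₀ (by exact_mod_cast hd.ne')
  have hσ₀sym : IsSymmetricState U σ₀ := by
    intro g
    have hg : U g * (U g)ᴴ = 1 := by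
      have := (Matrix.mem_unitaryGroup_iff).mp (hU g)
      simpa [Matrix.star_eq_conjTranspose] using this
    rw [hσ₀_def, Matrix.mul_smul, Matrix.mul_one, Matrix.smul_mul, hg]
  -- main argument
  refine aux_le_asymWeight U ρ ⟨1, ⟨zero_le_one, le_refl 1⟩, σ₀, ρ, hσ₀, hσ₀sym, hρ, by simp⟩ ?_
  rintro s ⟨hs0, hs1⟩ σ τ hσ hσsym hτ hdec
  -- abbreviations
  set p : ι → ℝ := fun i => ((K i * ρ * (K i)ᴴ).trace).re with hp_def
  set q : ι → ℝ := fun i => ((K i * σ * (K i)ᴴ).trace).re with hq_def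
  set r : ι → ℝ := fun i => ((K i * τ * (K i)ᴴ).trace).re with hr_def
  have hKσpsd : ∀ i, (K i * σ * (K i)ᴴ).PosSemidef :=
    fun i => hσ.1.mul_mul_conjTranspose_same (K i)
  have hKτpsd : ∀ i, (K i * τ * (K i)ᴴ).PosSemidef :=
    fun i => hτ.1.mul_mul_conjTranspose_same (K i)
  have hqnn : ∀ i, 0 ≤ q i := fun i => aux_psd_trace_re_nonneg (hKσpsd i)
  have hrnn : ∀ i, 0 ≤ r i := fun i => aux_psd_trace_re_nonneg (hKτpsd i)
  -- decomposition of the subnormalized outputs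
  have hPdec : ∀ i, K i * ρ * (K i)ᴴ
      = (1 - s) • (K i * σ * (K i)ᴴ) + s • (K i * τ * (K i)ᴴ) := by
    intro i
    rw [hdec]
    simp [Matrix.mul_add, Matrix.add_mul, Matrix.mul_smul, Matrix.smul_mul]
  have hpqr : ∀ i, p i = (1 - s) * q i + s * r i := by
    intro i
    have := congrArg (fun M : Matrix (Fin d) (Fin d) ℂ => (Matrix.trace M).re) (hPdec i)
    simpa [hp_def, hq_def, hr_def, Matrix.trace_add, Matrix.trace_smul,
      Complex.add_re, Complex.smul_re] using this
  -- symmetry of K i σ K iᴴ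
  have hKσsym : ∀ i, IsSymmetricState U (K i * σ * (K i)ᴴ) := by
    intro i g
    rw [← hcov i g σ, hσsym g]
  -- sum of r equals one
  have hr_sum : ∑ i : ι, r i = 1 := by
    have hS : (∑ i : ι, (K i * τ * (K i)ᴴ).trace) = 1 := by
      calc ∑ i : ι, (K i * τ * (K i)ᴴ).trace
          = ∑ i : ι, (((K i)ᴴ * K i) * τ).trace := by
            refine Finset.sum_congr rfl fun i _ => ?_
            rw [Matrix.trace_mul_comm (K i * τ) (K i)ᴴ, ← Matrix.mul_assoc]
        _ = ((∑ i : ι, (K i)ᴴ * K i) * τ).trace := by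
            rw [Finset.sum_mul, Matrix.trace_sum]
        _ = 1 := by rw [hK, Matrix.one_mul, hτ.2]
    have : ∑ i : ι, r i = (∑ i : ι, (K i * τ * (K i)ᴴ).trace).re := by
      rw [Complex.re_sum]
    rw [this, hS]; simp
  -- per-term bound
  have hterm : ∀ i, 0 < p i →
      asymWeight U ((p i)⁻¹ • (K i * ρ * (K i)ᴴ)) ≤ s * r i / p i := by
    intro i hp
    have hp' : p i ≠ 0 := ne_of_gt hp
    set t : ℝ := s * r i / p i with ht_def
    have htp : t * p i = s * r i := div_mul_cancel₀ _ hp'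
    have h1tp : (1 - t) * p i = (1 - s) * q i := by
      rw [sub_mul, one_mul, htp, hpqr i]; ring
    have ht0 : 0 ≤ t := div_nonneg (mul_nonneg hs0 (hrnn i)) hp.le
    have ht1 : t ≤ 1 := by
      rw [ht_def, div_le_one hp, hpqr i]
      nlinarith [hqnn i, hrnn i]
    -- construct σ'
    obtain ⟨σ', hσ'den, hσ'sym, hσ'eq⟩ :
        ∃ σ' : Matrix (Fin d) (Fin d) ℂ, IsDensity σ' ∧ IsSymmetricState U σ' ∧
          (1 - t) • σ' = ((1 - s) / p i) • (K i * σ * (K i)ᴴ) := by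
      by_cases hq : q i = 0
      · refine ⟨σ₀, hσ₀, hσ₀sym, ?_⟩
        have hz : K i * σ * (K i)ᴴ = 0 := by
          apply aux_psd_trace_zero (hKσpsd i)
          rw [aux_psd_trace_eq (hKσpsd i)]
          have hq0 : ((K i * σ * (K i)ᴴ).trace).re = 0 := hq
          rw [hq0, Complex.ofReal_zero]
        have ht1' : 1 - t = 0 := by
          have := h1tp
          rw [hq, mul_zero] at this
          rcases mul_eq_zero.mp this with h | h
          · exact h
          · exact absurd h hp'
        rw [hz, ht1', zero_smul, smul_zero]
      · have hq' : 0 < q i := lt_of_le_of_ne (hqnn i) (Ne.symm hq)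
        refine ⟨(q i)⁻¹ • (K i * σ * (K i)ᴴ), ⟨?_, ?_⟩, ?_, ?_⟩
        · exact aux_psd_smul (inv_nonneg.mpr (hqnn i)) (hKσpsd i)
        · rw [Matrix.trace_smul, aux_psd_trace_eq (hKσpsd i)]
          rw [Complex.real_smul, ← Complex.ofReal_mul]
          have he : (K i * σ * (K i)ᴴ).trace.re = q i := rfl
          rw [he, inv_mul_cancel₀ (ne_of_gt hq'), Complex.ofReal_one]
        · intro g
          rw [Matrix.mul_smul, Matrix.smul_mul, hKσsym i g]
        · rw [smul_smul]
          congr 1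
          field_simp
          linarith [h1tp]
    -- construct τ'
    obtain ⟨τ', hτ'den, hτ'eq⟩ :
        ∃ τ' : Matrix (Fin d) (Fin d) ℂ, IsDensity τ' ∧
          t • τ' = (s / p i) • (K i * τ * (K i)ᴴ) := by
      by_cases hr : r i = 0
      · refine ⟨σ₀, hσ₀, ?_⟩
        have hz : K i * τ * (K i)ᴴ = 0 := by
          apply aux_psd_trace_zero (hKτpsd i)
          rw [aux_psd_trace_eq (hKτpsd i)]
          have hr0 : ((K i * τ * (K i)ᴴ).trace).re = 0 := hr
          rw [hr0, Complex.ofReal_zero]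
        have ht0' : t = 0 := by rw [ht_def, hr, mul_zero, zero_div]
        rw [hz, ht0', zero_smul, smul_zero]
      · have hr' : 0 < r i := lt_of_le_of_ne (hrnn i) (Ne.symm hr)
        refine ⟨(r i)⁻¹ • (K i * τ * (K i)ᴴ), ⟨?_, ?_⟩, ?_⟩
        · exact aux_psd_smul (inv_nonneg.mpr (hrnn i)) (hKτpsd i)
        · rw [Matrix.trace_smul, aux_psd_trace_eq (hKτpsd i)]
          rw [Complex.real_smul, ← Complex.ofReal_mul]
          have he : (K i * τ * (K i)ᴴ).trace.re = r i := rfl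
          rw [he, inv_mul_cancel₀ (ne_of_gt hr'), Complex.ofReal_one]
        · rw [smul_smul]
          congr 1
          rw [ht_def]
          field_simp
    refine aux_asymWeight_le U _ ⟨ht0, ht1⟩ ⟨σ', τ', hσ'den, hσ'sym, hτ'den, ?_⟩
    rw [hσ'eq, hτ'eq, hPdec i, smul_add, smul_smul, smul_smul,
      div_eq_inv_mul, div_eq_inv_mul]
  -- summation
  show ∑ i ∈ Finset.univ.filter (fun i : ι => 0 < p i),
      p i * asymWeight U ((p i)⁻¹ • (K i * ρ * (K i)ᴴ)) ≤ s
  calc ∑ i ∈ Finset.univ.filter (fun i : ι => 0 < p i),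
        p i * asymWeight U ((p i)⁻¹ • (K i * ρ * (K i)ᴴ))
      ≤ ∑ i ∈ Finset.univ.filter (fun i : ι => 0 < p i), s * r i := by
        refine Finset.sum_le_sum fun i hi => ?_
        have hp : 0 < p i := (Finset.mem_filter.mp hi).2
        calc p i * asymWeight U ((p i)⁻¹ • (K i * ρ * (K i)ᴴ))
            ≤ p i * (s * r i / p i) :=
              mul_le_mul_of_nonneg_left (hterm i hp) hp.le
          _ = s * r i := by field_simp
    _ ≤ ∑ i : ι, s * r i := by
        refine Finset.sum_le_sum_of_subset_of_nonneg (Finset.filter_subset _ _)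
          (fun i _ _ => mul_nonneg hs0 (hrnn i))
    _ = s := by rw [← Finset.mul_sum, hr_sum, mul_one]
end
end

section
/- For every density matrix ρ on ℂ^d, A_w(ρ) ≥ ‖ρ − 𝒢(ρ)‖₂² / ‖ρ‖_∞ ≥ ‖ρ − 𝒢(ρ)‖₂², where ‖A‖₂² = Tr(A†A) is the squared Hilbert–Schmidt norm and ‖ρ‖_∞ is the largest eigenvalue of ρ. -/
open Matrix BigOperators
open scoped ComplexOrder

noncomputable section

/-- The group average (twirl) of a matrix. -/
noncomputable def groupAvg {d : ℕ} {G : Type*} [Group G] [Fintype G]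
    (U : G → Matrix (Fin d) (Fin d) ℂ) (X : Matrix (Fin d) (Fin d) ℂ) :
    Matrix (Fin d) (Fin d) ℂ :=
  ((Fintype.card G : ℝ)⁻¹) • ∑ g : G, U g * X * (U g)ᴴ

/-- The largest eigenvalue of a matrix (for a density matrix this is `‖ρ‖_∞`). -/
noncomputable def maxEigenvalue {n : Type*} [Fintype n] (A : Matrix n n ℂ) : ℝ :=
  sSup {r : ℝ | ∃ v : n → ℂ, v ≠ 0 ∧ A.mulVec v = (r : ℂ) • v}

set_option linter.unusedSectionVars false

section EigAux

variable {n : Type*} [Fintype n] [DecidableEq n]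

lemma real_smul_fun (r : ℝ) (v : n → ℂ) : r • v = ((r : ℂ)) • v := by
  funext i; simp [Complex.real_smul]

lemma dot_self_re (v : n → ℂ) : (star v ⬝ᵥ v).re = ∑ i, Complex.normSq (v i) := by
  rw [dotProduct, Complex.re_sum]
  refine Finset.sum_congr rfl fun i _ => ?_
  simp only [Pi.star_apply, Complex.star_def]
  rw [mul_comm, Complex.mul_conj, Complex.ofReal_re]

lemma dot_self_re_nonneg (v : n → ℂ) : 0 ≤ (star v ⬝ᵥ v).re := by
  rw [dot_self_re]; exact Finset.sum_nonneg fun i _ => Complex.normSq_nonneg _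

lemma dot_self_re_pos {v : n → ℂ} (hv : v ≠ 0) : 0 < (star v ⬝ᵥ v).re := by
  rw [dot_self_re]
  obtain ⟨i, hi⟩ := Function.ne_iff.mp hv
  exact Finset.sum_pos' (fun j _ => Complex.normSq_nonneg _)
    ⟨i, Finset.mem_univ i, by simpa using Complex.normSq_pos.mpr hi⟩

lemma dot_diag_re (f : n → ℝ) (w : n → ℂ) :
    (star w ⬝ᵥ (diagonal (Complex.ofReal ∘ f)) *ᵥ w).re
      = ∑ i, f i * Complex.normSq (w i) := by
  rw [dotProduct, Complex.re_sum]
  refine Finset.sum_congr rfl fun i _ => ?_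
  rw [mulVec_diagonal]
  have : star w i * ((Complex.ofReal ∘ f) i * w i)
      = ((f i * Complex.normSq (w i) : ℝ) : ℂ) := by
    push_cast
    simp only [Pi.star_apply, Complex.star_def, Function.comp_apply]
    rw [show (starRingEnd ℂ) (w i) * ((f i : ℂ) * w i)
        = (f i : ℂ) * (w i * (starRingEnd ℂ) (w i)) by ring, Complex.mul_conj]
  rw [this, Complex.ofReal_re]

lemma rayleigh_bound {A : Matrix n n ℂ} (hA : A.IsHermitian) {M : ℝ}
    (hM : ∀ i, hA.eigenvalues i ≤ M) (v : n → ℂ) :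
    (star v ⬝ᵥ A *ᵥ v).re ≤ M * (star v ⬝ᵥ v).re := by
  set V : Matrix n n ℂ := ↑(hA.eigenvectorUnitary) with hVdef
  have hV1 : V * star V = 1 := Matrix.mem_unitaryGroup_iff.mp hA.eigenvectorUnitary.2
  have hV2 : star V * V = 1 := Matrix.mem_unitaryGroup_iff'.mp hA.eigenvectorUnitary.2
  set w : n → ℂ := (star V) *ᵥ v with hwdef
  have hw : star w = star v ᵥ* V := by
    rw [hwdef, Matrix.star_eq_conjTranspose, Matrix.star_mulVec, conjTranspose_conjTranspose]
  have key1 : star v ⬝ᵥ A *ᵥ v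
      = star w ⬝ᵥ (diagonal (Complex.ofReal ∘ hA.eigenvalues)) *ᵥ w := by
    conv_lhs => rw [hA.spectral_theorem, Unitary.conjStarAlgAut_apply]
    rw [← hVdef, ← Matrix.mulVec_mulVec, ← Matrix.mulVec_mulVec,
      Matrix.dotProduct_mulVec (star v) V, ← hw, ← hwdef]
    rfl
  have key2 : star v ⬝ᵥ v = star w ⬝ᵥ w := by
    rw [hw, ← Matrix.dotProduct_mulVec, Matrix.mulVec_mulVec]
    rw [show V * star V = 1 from hV1, Matrix.one_mulVec]
  rw [key1, key2, dot_diag_re, dot_self_re]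
  rw [Finset.mul_sum]
  exact Finset.sum_le_sum fun i _ =>
    mul_le_mul_of_nonneg_right (hM i) (Complex.normSq_nonneg _)

lemma maxEig_eq [Nonempty n] {A : Matrix n n ℂ} (hA : A.IsHermitian) :
    maxEigenvalue A = Finset.univ.sup' Finset.univ_nonempty hA.eigenvalues := by
  set M := Finset.univ.sup' Finset.univ_nonempty hA.eigenvalues with hM
  have hub : ∀ r ∈ {r : ℝ | ∃ v : n → ℂ, v ≠ 0 ∧ A.mulVec v = (r : ℂ) • v}, r ≤ M := by
    rintro r ⟨v, hv, hEq⟩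
    have h1 := rayleigh_bound hA (M := M)
      (fun i => Finset.le_sup' hA.eigenvalues (Finset.mem_univ i)) v
    rw [hEq] at h1
    have h2 : (star v ⬝ᵥ (r : ℂ) • v).re = r * (star v ⬝ᵥ v).re := by
      rw [dotProduct_smul]
      simp [Complex.smul_re]
    rw [h2] at h1
    exact le_of_mul_le_mul_right h1 (dot_self_re_pos hv)
  have hmem : M ∈ {r : ℝ | ∃ v : n → ℂ, v ≠ 0 ∧ A.mulVec v = (r : ℂ) • v} := by
    obtain ⟨i0, -, hi0⟩ := Finset.exists_mem_eq_sup' Finset.univ_nonempty hA.eigenvalues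
    refine ⟨⇑(hA.eigenvectorBasis i0), ?_, ?_⟩
    · intro h
      exact hA.eigenvectorBasis.orthonormal.ne_zero i0 (by ext i; exact congrFun h i)
    · rw [hA.mulVec_eigenvectorBasis i0, hM, hi0, real_smul_fun]
  exact le_antisymm (csSup_le ⟨M, hmem⟩ hub) (le_csSup ⟨M, hub⟩ hmem)

lemma trace_eq_sum_eigen {A : Matrix n n ℂ} (hA : A.IsHermitian) :
    A.trace = ((∑ i, hA.eigenvalues i : ℝ) : ℂ) := by
  conv_lhs => rw [hA.spectral_theorem, Unitary.conjStarAlgAut_apply]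
  rw [Matrix.trace_mul_cycle, Unitary.coe_star_mul_self, Matrix.one_mul, Matrix.trace_diagonal]
  push_cast
  rfl

lemma trace_sq_eq_sum_eigen {A : Matrix n n ℂ} (hA : A.IsHermitian) :
    (Aᴴ * A).trace = ((∑ i, (hA.eigenvalues i) ^ 2 : ℝ) : ℂ) := by
  set V : Matrix n n ℂ := ↑(hA.eigenvectorUnitary) with hVdef
  have hV2 : star V * V = 1 := Matrix.mem_unitaryGroup_iff'.mp hA.eigenvectorUnitary.2
  set D : Matrix n n ℂ := diagonal (RCLike.ofReal ∘ hA.eigenvalues) with hD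
  rw [hA]
  have hsp : A = V * D * star V := hA.spectral_theorem
  have key : (V * D * star V) * (V * D * star V) = V * (D * D) * star V := by
    calc (V * D * star V) * (V * D * star V)
        = V * (D * ((star V * V) * (D * star V))) := by simp only [Matrix.mul_assoc]
      _ = V * (D * (D * star V)) := by rw [hV2, Matrix.one_mul]
      _ = V * (D * D) * star V := by simp only [Matrix.mul_assoc]
  rw [← hsp] at key
  rw [key, Matrix.trace_mul_cycle, Unitary.coe_star_mul_self, Matrix.one_mul]
  rw [hD, Matrix.diagonal_mul_diagonal, Matrix.trace_diagonal]
  push_cast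
  refine Finset.sum_congr rfl fun i _ => ?_
  simp [pow_two]

lemma trace_conjT_mul_self_re_nonneg (A : Matrix n n ℂ) : 0 ≤ ((Aᴴ * A).trace).re := by
  simp only [Matrix.trace, Matrix.diag_apply, Matrix.mul_apply, Matrix.conjTranspose_apply]
  rw [Complex.re_sum]
  refine Finset.sum_nonneg fun j _ => ?_
  rw [Complex.re_sum]
  refine Finset.sum_nonneg fun i _ => ?_
  rw [Complex.star_def, mul_comm, Complex.mul_conj, Complex.ofReal_re]
  exact Complex.normSq_nonneg _

end EigAux

section GrpAux

variable {d : ℕ} {G : Type*} [Group G] [Fintype G]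
variable {U : G → Matrix (Fin d) (Fin d) ℂ}

lemma aux_U_one (hU : ∀ g, U g ∈ Matrix.unitaryGroup (Fin d) ℂ)
    (hUhom : ∀ g₁ g₂, U (g₁ * g₂) = U g₁ * U g₂) : U 1 = 1 := by
  have h1 : U 1 = U 1 * U 1 := by rw [← hUhom]; rw [one_mul]
  have h2 : (U 1)ᴴ * U 1 = 1 := by
    rw [← Matrix.star_eq_conjTranspose]
    exact Matrix.mem_unitaryGroup_iff'.mp (hU 1)
  calc U 1 = ((U 1)ᴴ * U 1) * U 1 := by rw [h2, Matrix.one_mul]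
    _ = (U 1)ᴴ * (U 1 * U 1) := by rw [Matrix.mul_assoc]
    _ = (U 1)ᴴ * U 1 := by rw [← h1]
    _ = 1 := h2

lemma aux_U_inv (hU : ∀ g, U g ∈ Matrix.unitaryGroup (Fin d) ℂ)
    (hUhom : ∀ g₁ g₂, U (g₁ * g₂) = U g₁ * U g₂) (g : G) : (U g)ᴴ = U g⁻¹ := by
  have h2 : (U g)ᴴ * U g = 1 := by
    rw [← Matrix.star_eq_conjTranspose]
    exact Matrix.mem_unitaryGroup_iff'.mp (hU g)
  have h3 : U g * U g⁻¹ = 1 := by rw [← hUhom, mul_inv_cancel, aux_U_one hU hUhom]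
  calc (U g)ᴴ = (U g)ᴴ * (U g * U g⁻¹) := by rw [h3, Matrix.mul_one]
    _ = ((U g)ᴴ * U g) * U g⁻¹ := by rw [Matrix.mul_assoc]
    _ = U g⁻¹ := by rw [h2, Matrix.one_mul]

lemma aux_conj_symm (hU : ∀ g, U g ∈ Matrix.unitaryGroup (Fin d) ℂ)
    (hUhom : ∀ g₁ g₂, U (g₁ * g₂) = U g₁ * U g₂)
    {σ : Matrix (Fin d) (Fin d) ℂ} (hσ : IsSymmetricState U σ) (g : G) :
    (U g)ᴴ * σ * U g = σ := by
  have h1 : (U g⁻¹)ᴴ = U g := by rw [aux_U_inv hU hUhom, inv_inv]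
  rw [aux_U_inv hU hUhom, ← h1]
  exact hσ g⁻¹

lemma groupAvg_symm (hU : ∀ g, U g ∈ Matrix.unitaryGroup (Fin d) ℂ)
    (hUhom : ∀ g₁ g₂, U (g₁ * g₂) = U g₁ * U g₂) (X : Matrix (Fin d) (Fin d) ℂ) :
    IsSymmetricState U (groupAvg U X) := by
  intro h
  rw [groupAvg, Matrix.mul_smul, Matrix.smul_mul, Matrix.mul_sum, Finset.sum_mul]
  congr 1
  refine Fintype.sum_equiv (Equiv.mulLeft h) _ _ fun g => ?_
  simp only [Equiv.coe_mulLeft]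
  rw [hUhom, Matrix.conjTranspose_mul]
  simp only [Matrix.mul_assoc]

lemma groupAvg_of_symm {σ : Matrix (Fin d) (Fin d) ℂ} (hσ : IsSymmetricState U σ) :
    groupAvg U σ = σ := by
  rw [groupAvg]
  have : ∀ g : G, U g * σ * (U g)ᴴ = σ := hσ
  rw [Finset.sum_congr rfl fun g _ => this g, Finset.sum_const, Finset.card_univ,
    ← Nat.cast_smul_eq_nsmul ℝ, smul_smul,
    inv_mul_cancel₀ (by exact_mod_cast Fintype.card_ne_zero), one_smul]

lemma groupAvg_add (X Y : Matrix (Fin d) (Fin d) ℂ) :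
    groupAvg U (X + Y) = groupAvg U X + groupAvg U Y := by
  simp only [groupAvg, Matrix.mul_add, Matrix.add_mul, Finset.sum_add_distrib, smul_add]

lemma groupAvg_smul (a : ℝ) (X : Matrix (Fin d) (Fin d) ℂ) :
    groupAvg U (a • X) = a • groupAvg U X := by
  simp only [groupAvg, Matrix.smul_mul, Matrix.mul_smul, ← Finset.smul_sum]
  rw [smul_comm]

lemma conjTranspose_groupAvg (X : Matrix (Fin d) (Fin d) ℂ) :
    (groupAvg U X)ᴴ = groupAvg U Xᴴ := by
  rw [groupAvg, Matrix.conjTranspose_smul, star_trivial, groupAvg]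
  congr 1
  rw [Matrix.conjTranspose_sum]
  refine Finset.sum_congr rfl fun g _ => ?_
  simp only [Matrix.conjTranspose_mul, Matrix.conjTranspose_conjTranspose, Matrix.mul_assoc]

lemma trace_groupAvg_mul (hU : ∀ g, U g ∈ Matrix.unitaryGroup (Fin d) ℂ)
    (hUhom : ∀ g₁ g₂, U (g₁ * g₂) = U g₁ * U g₂)
    (X : Matrix (Fin d) (Fin d) ℂ) {σ : Matrix (Fin d) (Fin d) ℂ}
    (hσ : IsSymmetricState U σ) :
    ((groupAvg U X) * σ).trace = (X * σ).trace := by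
  rw [groupAvg, Matrix.smul_mul, Matrix.trace_smul, Finset.sum_mul, Matrix.trace_sum]
  have : ∀ g : G, ((U g * X * (U g)ᴴ) * σ).trace = (X * σ).trace := by
    intro g
    calc ((U g * X * (U g)ᴴ) * σ).trace
        = (U g * (X * ((U g)ᴴ * σ))).trace := by simp only [Matrix.mul_assoc]
      _ = ((X * ((U g)ᴴ * σ)) * U g).trace := by rw [Matrix.trace_mul_comm]
      _ = (X * ((U g)ᴴ * σ * U g)).trace := by simp only [Matrix.mul_assoc]
      _ = (X * σ).trace := by rw [aux_conj_symm hU hUhom hσ g]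
  rw [Finset.sum_congr rfl fun g _ => this g, Finset.sum_const, Finset.card_univ,
    ← Nat.cast_smul_eq_nsmul ℝ, smul_smul,
    inv_mul_cancel₀ (by exact_mod_cast Fintype.card_ne_zero), one_smul]

end GrpAux

theorem asymWeight_ge_HS_distance
    {d : ℕ} {G : Type*} [Group G] [Fintype G]
    (U : G → Matrix (Fin d) (Fin d) ℂ)
    (hU : ∀ g, U g ∈ Matrix.unitaryGroup (Fin d) ℂ)
    (hUhom : ∀ g₁ g₂, U (g₁ * g₂) = U g₁ * U g₂)
    (ρ : Matrix (Fin d) (Fin d) ℂ) (hρ : IsDensity ρ) :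
    asymWeight U ρ ≥
      (((ρ - groupAvg U ρ)ᴴ * (ρ - groupAvg U ρ)).trace).re / maxEigenvalue ρ ∧
    (((ρ - groupAvg U ρ)ᴴ * (ρ - groupAvg U ρ)).trace).re / maxEigenvalue ρ ≥
      (((ρ - groupAvg U ρ)ᴴ * (ρ - groupAvg U ρ)).trace).re := by
  obtain ⟨hρP, hρtr⟩ := hρ
  have hρH : ρ.IsHermitian := hρP.1
  have hdne : Nonempty (Fin d) := by
    by_contra h
    rw [not_nonempty_iff] at h
    rw [Matrix.trace, Finset.univ_eq_empty, Finset.sum_empty] at hρtr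
    exact one_ne_zero hρtr.symm
  have hdpos : 0 < d := Fin.pos_iff_nonempty.mpr hdne
  set x := (((ρ - groupAvg U ρ)ᴴ * (ρ - groupAvg U ρ)).trace).re with hxdef
  have hME : maxEigenvalue ρ = Finset.univ.sup' Finset.univ_nonempty hρH.eigenvalues :=
    maxEig_eq hρH
  set M := Finset.univ.sup' Finset.univ_nonempty hρH.eigenvalues with hMdef
  have hρsum : ∑ i, hρH.eigenvalues i = 1 := by
    have h := trace_eq_sum_eigen hρH
    rw [hρtr] at h
    exact_mod_cast h.symm
  have hρnn : ∀ i, 0 ≤ hρH.eigenvalues i := hρP.eigenvalues_nonneg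
  have hM1 : M ≤ 1 := by
    obtain ⟨i0, -, hi0⟩ := Finset.exists_mem_eq_sup' Finset.univ_nonempty hρH.eigenvalues
    rw [hMdef, hi0]
    calc hρH.eigenvalues i0 ≤ ∑ i, hρH.eigenvalues i :=
          Finset.single_le_sum (fun i _ => hρnn i) (Finset.mem_univ i0)
      _ = 1 := hρsum
  have hMpos : 0 < M := by
    by_contra h
    push_neg at h
    have : ∑ i, hρH.eigenvalues i ≤ 0 :=
      Finset.sum_nonpos fun i _ =>
        le_trans (Finset.le_sup' hρH.eigenvalues (Finset.mem_univ i)) h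
    linarith
  have hx0 : 0 ≤ x := trace_conjT_mul_self_re_nonneg _
  have hMEpos : 0 < maxEigenvalue ρ := hME ▸ hMpos
  constructor
  · rw [ge_iff_le, asymWeight]
    apply le_csInf
    · refine ⟨1, ⟨zero_le_one, le_refl 1⟩, ((d : ℝ)⁻¹ • 1 : Matrix (Fin d) (Fin d) ℂ), ρ,
        ⟨PosSemidef.of_dotProduct_mulVec_nonneg ?_ ?_, ?_⟩, ?_, ⟨hρP, hρtr⟩, ?_⟩
      · rw [Matrix.IsHermitian, Matrix.conjTranspose_smul, star_trivial,
          Matrix.conjTranspose_one]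
      · intro v
        rw [Matrix.smul_mulVec, Matrix.one_mulVec, dotProduct_smul, Complex.real_smul]
        exact mul_nonneg (by positivity) (dotProduct_star_self_nonneg v)
      · rw [Matrix.trace_smul, Matrix.trace_one, Fintype.card_fin]
        rw [Complex.real_smul]
        push_cast
        field_simp
      · intro g
        rw [Matrix.mul_smul, Matrix.smul_mul, Matrix.mul_one]
        have : U g * (U g)ᴴ = 1 := by
          rw [← Matrix.star_eq_conjTranspose]
          exact Matrix.mem_unitaryGroup_iff.mp (hU g)
        rw [this]
      · norm_num
    · rintro s ⟨⟨hs0, hs1⟩, σ, τ, ⟨hσP, hσtr⟩, hσsym, ⟨hτP, hτtr⟩, hdecomp⟩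
      rw [div_le_iff₀ hMEpos, hME]
      -- goal: x ≤ s * M
      have hτH : τ.IsHermitian := hτP.1
      set Q := groupAvg U τ with hQdef
      have hGρ : groupAvg U ρ = (1 - s) • σ + s • Q := by
        rw [hdecomp, groupAvg_add, groupAvg_smul, groupAvg_smul, groupAvg_of_symm hσsym]
      have hΔ : ρ - groupAvg U ρ = s • (τ - Q) := by
        rw [hGρ]
        conv_lhs => rw [hdecomp]
        module
      set E := τ - Q with hEdef
      have hterm : (ρ - groupAvg U ρ)ᴴ * (ρ - groupAvg U ρ) = (s * s) • (Eᴴ * E) := by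
        rw [hΔ, Matrix.conjTranspose_smul, star_trivial, Matrix.smul_mul, Matrix.mul_smul,
          smul_smul]
      have hx_eq : x = (s * s) * ((Eᴴ * E).trace).re := by
        rw [hxdef, hterm, Matrix.trace_smul, Complex.smul_re, smul_eq_mul]
      -- cross-term identities
      have hQconj : Qᴴ = groupAvg U τᴴ := conjTranspose_groupAvg τ
      have hQsym : IsSymmetricState U Q := groupAvg_symm hU hUhom τ
      have h1 : (τᴴ * Q).trace = (Qᴴ * Q).trace := by
        rw [hQconj]
        exact (trace_groupAvg_mul hU hUhom τᴴ hQsym).symm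
      have hQQstar : star ((Qᴴ * Q).trace) = (Qᴴ * Q).trace := by
        rw [← Matrix.trace_conjTranspose, Matrix.conjTranspose_mul,
          Matrix.conjTranspose_conjTranspose]
      have h2 : (Qᴴ * τ).trace = (Qᴴ * Q).trace := by
        have : (Qᴴ * τ).trace = star ((τᴴ * Q).trace) := by
          rw [← Matrix.trace_conjTranspose, Matrix.conjTranspose_mul,
            Matrix.conjTranspose_conjTranspose]
        rw [this, h1, hQQstar]
      have hexpand : (Eᴴ * E).trace = (τᴴ * τ).trace - (Qᴴ * Q).trace := by
        rw [hEdef, Matrix.conjTranspose_sub, Matrix.sub_mul, Matrix.mul_sub, Matrix.mul_sub,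
          Matrix.trace_sub, Matrix.trace_sub, Matrix.trace_sub, h1, h2]
        ring
      have hTle : ((Eᴴ * E).trace).re ≤ ((τᴴ * τ).trace).re := by
        rw [hexpand, Complex.sub_re]
        have := trace_conjT_mul_self_re_nonneg Q
        linarith
      -- eigenvalue bound for τ
      have hτsum : ∑ i, hτH.eigenvalues i = 1 := by
        have h := trace_eq_sum_eigen hτH
        rw [hτtr] at h
        exact_mod_cast h.symm
      have hτnn : ∀ i, 0 ≤ hτH.eigenvalues i := hτP.eigenvalues_nonneg
      set μ := Finset.univ.sup' Finset.univ_nonempty hτH.eigenvalues with hμdef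
      have hτsq : ((τᴴ * τ).trace).re = ∑ i, (hτH.eigenvalues i) ^ 2 := by
        rw [trace_sq_eq_sum_eigen hτH, Complex.ofReal_re]
      have hsqle : ∑ i, (hτH.eigenvalues i) ^ 2 ≤ μ := by
        calc ∑ i, (hτH.eigenvalues i) ^ 2 ≤ ∑ i, μ * hτH.eigenvalues i := by
              refine Finset.sum_le_sum fun i _ => ?_
              rw [pow_two]
              exact mul_le_mul_of_nonneg_right
                (Finset.le_sup' hτH.eigenvalues (Finset.mem_univ i)) (hτnn i)
          _ = μ := by rw [← Finset.mul_sum, hτsum, mul_one]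
      -- s * μ ≤ M
      have hsμM : s * μ ≤ M := by
        obtain ⟨i0, -, hi0⟩ := Finset.exists_mem_eq_sup' Finset.univ_nonempty hτH.eigenvalues
        set v : Fin d → ℂ := ⇑(hτH.eigenvectorBasis i0) with hvdef
        have hvne : v ≠ 0 := fun h =>
          hτH.eigenvectorBasis.orthonormal.ne_zero i0 (by ext i; exact congrFun h i)
        have hc : 0 < (star v ⬝ᵥ v).re := dot_self_re_pos hvne
        have hEig : τ *ᵥ v = μ • v := by
          rw [hμdef, hi0]
          exact hτH.mulVec_eigenvectorBasis i0
        have hray : (star v ⬝ᵥ ρ *ᵥ v).re ≤ M * (star v ⬝ᵥ v).re :=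
          rayleigh_bound hρH (M := M)
            (fun i => Finset.le_sup' hρH.eigenvalues (Finset.mem_univ i)) v
        have hlow : s * μ * (star v ⬝ᵥ v).re ≤ (star v ⬝ᵥ ρ *ᵥ v).re := by
          conv_rhs => rw [hdecomp]
          rw [Matrix.add_mulVec, dotProduct_add, Complex.add_re]
          have hσ0 : 0 ≤ (star v ⬝ᵥ ((1 - s) • σ) *ᵥ v).re := by
            rw [Matrix.smul_mulVec, dotProduct_smul, Complex.smul_re, smul_eq_mul]
            have hp := hσP.dotProduct_mulVec_nonneg v
            have hre : 0 ≤ (star v ⬝ᵥ σ *ᵥ v).re := by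
              have := (Complex.le_def.mp hp).1
              simpa using this
            have hs1' : 0 ≤ 1 - s := by linarith
            exact mul_nonneg hs1' hre
          have hτ0 : (star v ⬝ᵥ (s • τ) *ᵥ v).re = s * μ * (star v ⬝ᵥ v).re := by
            rw [Matrix.smul_mulVec, hEig, smul_smul, dotProduct_smul, Complex.smul_re,
              smul_eq_mul]
          rw [hτ0]
          linarith
        have := le_trans hlow hray
        exact le_of_mul_le_mul_right (by linarith) hc
      calc x = (s * s) * ((Eᴴ * E).trace).re := hx_eq
        _ ≤ (s * s) * μ := by
            refine mul_le_mul_of_nonneg_left ?_ (mul_self_nonneg s)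
            calc ((Eᴴ * E).trace).re ≤ ((τᴴ * τ).trace).re := hTle
              _ = ∑ i, (hτH.eigenvalues i) ^ 2 := hτsq
              _ ≤ μ := hsqle
        _ = s * (s * μ) := by ring
        _ ≤ s * M := mul_le_mul_of_nonneg_left hsμM hs0
  · rw [ge_iff_le, le_div_iff₀ hMEpos]
    calc x * maxEigenvalue ρ ≤ x * 1 := by
          refine mul_le_mul_of_nonneg_left ?_ hx0
          rw [hME]; exact hM1
      _ = x := mul_one x
end
end

section
/- For every density matrix ρ on ℂ^d with d ≥ 2, the asymmetry weight dominates the rescaled robustness of asymmetry: A_w(ρ) ≥ A_R(ρ)/(d−1). (Here one uses that A_R(τ) ≤ d−1 for every density matrix τ on ℂ^d.) -/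
open Matrix BigOperators
open scoped ComplexOrder

noncomputable section

/-- The robustness of asymmetry. -/
noncomputable def asymRobustness {d : ℕ} {G : Type*} [Group G]
    (U : G → Matrix (Fin d) (Fin d) ℂ) (ρ : Matrix (Fin d) (Fin d) ℂ) : ℝ :=
  sInf {s : ℝ | 0 ≤ s ∧ ∃ τ : Matrix (Fin d) (Fin d) ℂ, IsDensity τ ∧
    IsSymmetricState U ((1 + s)⁻¹ • (ρ + s • τ))}

lemma trace_eq_sum_eigenvalues' {d : ℕ} {τ : Matrix (Fin d) (Fin d) ℂ}
    (h : τ.IsHermitian) : τ.trace = ∑ i, (h.eigenvalues i : ℂ) := by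
  conv_lhs => rw [h.spectral_theorem]
  rw [Unitary.conjStarAlgAut_apply]
  rw [Matrix.trace_mul_cycle]
  rw [Matrix.mem_unitaryGroup_iff'.mp (h.eigenvectorUnitary).2]
  simp [Matrix.trace_diagonal]

lemma one_sub_posSemidef' {d : ℕ} {τ : Matrix (Fin d) (Fin d) ℂ}
    (hpsd : τ.PosSemidef) (htr : τ.trace = 1) : (1 - τ).PosSemidef := by
  have h := hpsd.1
  have hsum : ∑ i, h.eigenvalues i = 1 := by
    have := trace_eq_sum_eigenvalues' h
    rw [htr] at this
    exact_mod_cast this.symm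
  have hle : ∀ i, h.eigenvalues i ≤ 1 := fun i => by
    rw [← hsum]
    exact Finset.single_le_sum (fun j _ => hpsd.eigenvalues_nonneg j) (Finset.mem_univ i)
  have key : (1 : Matrix (Fin d) (Fin d) ℂ) - τ =
      (h.eigenvectorUnitary : Matrix (Fin d) (Fin d) ℂ) *
        Matrix.diagonal (fun i => ((1 - h.eigenvalues i : ℝ) : ℂ)) *
        (h.eigenvectorUnitary : Matrix (Fin d) (Fin d) ℂ)ᴴ := by
    have h1 : (h.eigenvectorUnitary : Matrix (Fin d) (Fin d) ℂ) *
        (h.eigenvectorUnitary : Matrix (Fin d) (Fin d) ℂ)ᴴ = 1 :=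
      Matrix.mem_unitaryGroup_iff.mp (h.eigenvectorUnitary).2
    conv_lhs => rw [h.spectral_theorem]
    have : Matrix.diagonal (fun i => ((1 - h.eigenvalues i : ℝ) : ℂ)) =
        1 - Matrix.diagonal (RCLike.ofReal ∘ h.eigenvalues) := by
      rw [← Matrix.diagonal_one, Matrix.diagonal_sub]
      congr 1 with i
      push_cast
      simp
    rw [this, Matrix.mul_sub, Matrix.sub_mul, Matrix.mul_one, h1]
    rfl
  rw [key]
  refine Matrix.PosSemidef.mul_mul_conjTranspose_same ?_ _
  refine Matrix.posSemidef_diagonal_iff.mpr fun i => ?_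
  rw [Complex.le_def]
  constructor <;> simp [sub_nonneg, hle i]

lemma posSemidef_smul_nonneg' {d : ℕ} {c : ℂ} (hc : 0 ≤ c)
    {A : Matrix (Fin d) (Fin d) ℂ} (hA : A.PosSemidef) : (c • A).PosSemidef := by
  have hcs : star c = c := by
    rw [Complex.star_def, Complex.conj_eq_iff_im]
    exact (Complex.le_def.mp hc).2.symm
  constructor
  · rw [Matrix.IsHermitian, Matrix.conjTranspose_smul, hA.1.eq, hcs]
  · intro x
    have h := mul_nonneg hc (hA.2 x)
    convert h using 1
    simp only [Finsupp.mul_sum]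
    refine Finsupp.sum_congr fun i _ => Finsupp.sum_congr fun j _ => ?_
    rw [Matrix.smul_apply, smul_eq_mul]
    ring

lemma real_smul_eq_complex_smul' {d : ℕ} (r : ℝ) (A : Matrix (Fin d) (Fin d) ℂ) :
    r • A = (r : ℂ) • A := by
  ext i j
  simp [Complex.real_smul]

theorem asymWeight_ge_robustness_div
    {d : ℕ} (hd : 2 ≤ d) {G : Type*} [Group G] [Fintype G]
    (U : G → Matrix (Fin d) (Fin d) ℂ)
    (hU : ∀ g, U g ∈ Matrix.unitaryGroup (Fin d) ℂ)
    (hUhom : ∀ g₁ g₂, U (g₁ * g₂) = U g₁ * U g₂)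
    (ρ : Matrix (Fin d) (Fin d) ℂ) (hρ : IsDensity ρ) :
    asymWeight U ρ ≥ asymRobustness U ρ / ((d : ℝ) - 1) := by
  have hd2 : (2 : ℝ) ≤ d := by exact_mod_cast hd
  have hd1 : (0 : ℝ) < (d : ℝ) - 1 := by linarith
  have hdne : (d : ℂ) ≠ 0 := by
    exact_mod_cast (by positivity : (0:ℝ) < (d:ℝ)).ne'
  have hdC : ((d : ℂ) - 1) ≠ 0 := by
    have : (((d : ℝ) - 1 : ℝ) : ℂ) ≠ 0 := Complex.ofReal_ne_zero.mpr hd1.ne'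
    push_cast at this
    exact this
  have hUg : ∀ g, U g * (U g)ᴴ = 1 := fun g => by
    simpa [Matrix.star_eq_conjTranspose] using Matrix.mem_unitaryGroup_iff.mp (hU g)
  -- nonemptiness of the weight set
  have hWne : {s : ℝ | s ∈ Set.Icc (0 : ℝ) 1 ∧
      ∃ σ τ : Matrix (Fin d) (Fin d) ℂ,
      IsDensity σ ∧ IsSymmetricState U σ ∧ IsDensity τ ∧
      ρ = (1 - s) • σ + s • τ}.Nonempty := by
    refine ⟨1, ⟨by norm_num, le_refl 1⟩, ((d : ℝ)⁻¹ • 1), ρ, ?_, ?_, hρ, by simp⟩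
    · constructor
      · rw [real_smul_eq_complex_smul']
        refine posSemidef_smul_nonneg' ?_ Matrix.PosSemidef.one
        exact_mod_cast Complex.zero_le_real.mpr (inv_nonneg.mpr (by positivity : (0:ℝ) ≤ (d:ℝ)))
      · rw [real_smul_eq_complex_smul', Matrix.trace_smul, Matrix.trace_one, smul_eq_mul]
        push_cast
        field_simp
        simp
    · intro g
      rw [real_smul_eq_complex_smul']
      rw [Matrix.mul_smul, Matrix.smul_mul, Matrix.mul_one, hUg g]
  rw [ge_iff_le, asymWeight]
  refine le_csInf hWne ?_
  rintro s ⟨⟨hs0, hs1⟩, σ, τ, hσ, hσsym, hτ, hdecomp⟩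
  rw [div_le_iff₀ hd1]
  -- it suffices that s*(d-1) belongs to the robustness set
  refine csInf_le ⟨0, fun x hx => hx.1⟩ ?_
  refine ⟨by positivity, ((d : ℝ) - 1)⁻¹ • (1 - τ), ?_, ?_⟩
  · constructor
    · rw [real_smul_eq_complex_smul']
      refine posSemidef_smul_nonneg' ?_ (one_sub_posSemidef' hτ.1 hτ.2)
      exact_mod_cast Complex.zero_le_real.mpr (inv_nonneg.mpr hd1.le)
    · rw [real_smul_eq_complex_smul', Matrix.trace_smul, Matrix.trace_sub,
        Matrix.trace_one, hτ.2, smul_eq_mul]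
      push_cast
      simp only [Fintype.card_fin]
      push_cast
      exact inv_mul_cancel₀ hdC
  · -- the combination is (1-s)•σ + s•1 up to scaling, which is symmetric
    have hcomb : ρ + (s * ((d : ℝ) - 1)) • (((d : ℝ) - 1)⁻¹ • (1 - τ)) =
        (1 - s) • σ + s • (1 : Matrix (Fin d) (Fin d) ℂ) := by
      rw [smul_smul, mul_assoc, mul_inv_cancel₀ hd1.ne', mul_one, hdecomp, smul_sub]
      abel
    intro g
    rw [hcomb]
    rw [Matrix.mul_smul, Matrix.smul_mul, Matrix.mul_add, Matrix.add_mul,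
      Matrix.mul_smul, Matrix.mul_smul, Matrix.smul_mul, Matrix.smul_mul,
      Matrix.mul_one, hUg g, hσsym g]
end
end

section
/- The coherence weight is convex: for all density matrices ρ₁, ρ₂ on ℂ^d and every p ∈ [0,1], C_w(pρ₁ + (1−p)ρ₂) ≤ p·C_w(ρ₁) + (1−p)·C_w(ρ₂). -/
open Matrix BigOperators
open scoped ComplexOrder

set_option maxHeartbeats 800000

noncomputable section

/-- A matrix is incoherent if it is diagonal in the fixed (standard) basis. -/
def IsIncoherent {n : Type*} (σ : Matrix n n ℂ) : Prop :=
  ∀ i j, i ≠ j → σ i j = 0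

/-- The coherence weight of a state `ρ`. -/
noncomputable def cohWeight {n : Type*} [Fintype n] (ρ : Matrix n n ℂ) : ℝ :=
  sInf {s : ℝ | s ∈ Set.Icc (0 : ℝ) 1 ∧
    ∃ σ τ : Matrix n n ℂ,
      IsDensity σ ∧ IsIncoherent σ ∧ IsDensity τ ∧
      ρ = (1 - s) • σ + s • τ}

lemma psd_rsmul {n : Type*} [Fintype n] {M : Matrix n n ℂ} (h : M.PosSemidef)
    {a : ℝ} (ha : 0 ≤ a) : (a • M).PosSemidef := by
  rw [posSemidef_iff_dotProduct_mulVec]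
  constructor
  · unfold Matrix.IsHermitian
    rw [conjTranspose_smul, h.1.eq, star_trivial]
  · intro x
    have := h.dotProduct_mulVec_nonneg x
    have : (0:ℂ) ≤ (a:ℂ) * (star x ⬝ᵥ M *ᵥ x) :=
      mul_nonneg (by exact_mod_cast Complex.zero_le_real.mpr ha) this
    simpa [smul_mulVec, dotProduct_smul, Complex.real_smul] using this

lemma density_comb {n : Type*} [Fintype n] {M N : Matrix n n ℂ}
    (hM : IsDensity M) (hN : IsDensity N) {a b : ℝ} (ha : 0 ≤ a) (hb : 0 ≤ b)
    (hab : a + b = 1) : IsDensity (a • M + b • N) := by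
  refine ⟨(psd_rsmul hM.1 ha).add (psd_rsmul hN.1 hb), ?_⟩
  rw [trace_add, trace_smul, trace_smul, hM.2, hN.2]
  simp [Complex.real_smul]
  exact_mod_cast hab

lemma incoh_comb {n : Type*} {M N : Matrix n n ℂ}
    (hM : IsIncoherent M) (hN : IsIncoherent N) (a b : ℝ) :
    IsIncoherent (a • M + b • N) := by
  intro i j hij
  simp [hM i j hij, hN i j hij]

lemma mem_comb {n : Type*} [Fintype n] {ρ₁ ρ₂ : Matrix n n ℂ} {s₁ s₂ p : ℝ}
    (hp : p ∈ Set.Icc (0:ℝ) 1)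
    (h₁ : s₁ ∈ {s : ℝ | s ∈ Set.Icc (0 : ℝ) 1 ∧
      ∃ σ τ : Matrix n n ℂ, IsDensity σ ∧ IsIncoherent σ ∧ IsDensity τ ∧
        ρ₁ = (1 - s) • σ + s • τ})
    (h₂ : s₂ ∈ {s : ℝ | s ∈ Set.Icc (0 : ℝ) 1 ∧
      ∃ σ τ : Matrix n n ℂ, IsDensity σ ∧ IsIncoherent σ ∧ IsDensity τ ∧
        ρ₂ = (1 - s) • σ + s • τ}) :
    p * s₁ + (1 - p) * s₂ ∈ {s : ℝ | s ∈ Set.Icc (0 : ℝ) 1 ∧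
      ∃ σ τ : Matrix n n ℂ, IsDensity σ ∧ IsIncoherent σ ∧ IsDensity τ ∧
        p • ρ₁ + (1 - p) • ρ₂ = (1 - s) • σ + s • τ} := by
  obtain ⟨hp0, hp1⟩ := hp
  obtain ⟨⟨hs₁0, hs₁1⟩, σ₁, τ₁, hσ₁, hσ₁i, hτ₁, hρ₁⟩ := h₁
  obtain ⟨⟨hs₂0, hs₂1⟩, σ₂, τ₂, hσ₂, hσ₂i, hτ₂, hρ₂⟩ := h₂
  set s : ℝ := p * s₁ + (1 - p) * s₂ with hs
  have hq0 : 0 ≤ 1 - p := by linarith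
  have hs0 : 0 ≤ s := by positivity
  have hs1 : s ≤ 1 := by nlinarith
  have key : 1 - s = p * (1 - s₁) + (1 - p) * (1 - s₂) := by ring
  refine ⟨⟨hs0, hs1⟩, ?_⟩
  by_cases hz : 1 - s = 0
  · -- s = 1 : everything goes into τ
    have hps : p * (1 - s₁) = 0 ∧ (1 - p) * (1 - s₂) = 0 := by
      constructor <;> linarith [mul_nonneg hp0 (by linarith : (0:ℝ) ≤ 1 - s₁),
        mul_nonneg hq0 (by linarith : (0:ℝ) ≤ 1 - s₂), key]
    refine ⟨σ₁, (p * s₁) • τ₁ + ((1 - p) * s₂) • τ₂, hσ₁, hσ₁i, ?_, ?_⟩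
    · refine density_comb hτ₁ hτ₂ (by positivity) (by positivity) ?_
      linarith [hs, key]
    · have hs1' : s = 1 := by linarith
      rw [hρ₁, hρ₂, hz]
      rw [hs1']
      have e1 : p • ((1 - s₁) • σ₁ + s₁ • τ₁) = (p * (1-s₁)) • σ₁ + (p * s₁) • τ₁ := by
        rw [smul_add, smul_smul, smul_smul]
      have e2 : (1-p) • ((1 - s₂) • σ₂ + s₂ • τ₂)
          = ((1-p) * (1-s₂)) • σ₂ + ((1-p) * s₂) • τ₂ := by
        rw [smul_add, smul_smul, smul_smul]
      rw [e1, e2, hps.1, hps.2]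
      simp [smul_add]
  · by_cases hz2 : s = 0
    · -- s = 0 : everything goes into σ
      have hps : p * s₁ = 0 ∧ (1 - p) * s₂ = 0 := by
        constructor <;> linarith [mul_nonneg hp0 hs₁0, mul_nonneg hq0 hs₂0, hs]
      refine ⟨(p * (1 - s₁)) • σ₁ + ((1 - p) * (1 - s₂)) • σ₂, τ₁,
        density_comb hσ₁ hσ₂ (mul_nonneg hp0 (by linarith)) (mul_nonneg hq0 (by linarith))
          (by linarith [key]),
        incoh_comb hσ₁i hσ₂i _ _, hτ₁, ?_⟩
      rw [hρ₁, hρ₂, hz2]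
      have e1 : p • ((1 - s₁) • σ₁ + s₁ • τ₁) = (p * (1-s₁)) • σ₁ + (p * s₁) • τ₁ := by
        rw [smul_add, smul_smul, smul_smul]
      have e2 : (1-p) • ((1 - s₂) • σ₂ + s₂ • τ₂)
          = ((1-p) * (1-s₂)) • σ₂ + ((1-p) * s₂) • τ₂ := by
        rw [smul_add, smul_smul, smul_smul]
      rw [e1, e2, hps.1, hps.2]
      simp [smul_add, smul_smul]
    · -- generic case
      have h1s : 0 < 1 - s := lt_of_le_of_ne (by linarith) (fun h => hz h.symm)
      have hspos : 0 < s := lt_of_le_of_ne hs0 (fun h => hz2 h.symm)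
      refine ⟨(p * (1 - s₁) / (1 - s)) • σ₁ + ((1 - p) * (1 - s₂) / (1 - s)) • σ₂,
        (p * s₁ / s) • τ₁ + ((1 - p) * s₂ / s) • τ₂,
        density_comb hσ₁ hσ₂
          (div_nonneg (mul_nonneg hp0 (by linarith)) h1s.le)
          (div_nonneg (mul_nonneg hq0 (by linarith)) h1s.le)
          (by rw [← add_div, ← key, div_self hz]),
        incoh_comb hσ₁i hσ₂i _ _,
        density_comb hτ₁ hτ₂
          (div_nonneg (mul_nonneg hp0 hs₁0) hspos.le)
          (div_nonneg (mul_nonneg hq0 hs₂0) hspos.le)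
          (by rw [← add_div, ← hs, div_self hz2]),
        ?_⟩
      have e1 : p • ((1 - s₁) • σ₁ + s₁ • τ₁) = (p * (1-s₁)) • σ₁ + (p * s₁) • τ₁ := by
        rw [smul_add, smul_smul, smul_smul]
      have e2 : (1-p) • ((1 - s₂) • σ₂ + s₂ • τ₂)
          = ((1-p) * (1-s₂)) • σ₂ + ((1-p) * s₂) • τ₂ := by
        rw [smul_add, smul_smul, smul_smul]
      have eσ : (1 - s) • ((p * (1 - s₁) / (1 - s)) • σ₁ + ((1 - p) * (1 - s₂) / (1 - s)) • σ₂)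
          = (p * (1 - s₁)) • σ₁ + ((1 - p) * (1 - s₂)) • σ₂ := by
        rw [smul_add, smul_smul, smul_smul, mul_div_cancel₀ _ hz, mul_div_cancel₀ _ hz]
      have eτ : s • ((p * s₁ / s) • τ₁ + ((1 - p) * s₂ / s) • τ₂)
          = (p * s₁) • τ₁ + ((1 - p) * s₂) • τ₂ := by
        rw [smul_add, smul_smul, smul_smul, mul_div_cancel₀ _ hz2, mul_div_cancel₀ _ hz2]
      rw [hρ₁, hρ₂, e1, e2, eσ, eτ]
      abel

theorem cohWeight_convex {d : ℕ}
    (ρ₁ ρ₂ : Matrix (Fin d) (Fin d) ℂ) (hρ₁ : IsDensity ρ₁) (hρ₂ : IsDensity ρ₂)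
    (p : ℝ) (hp : p ∈ Set.Icc (0 : ℝ) 1) :
    cohWeight (p • ρ₁ + (1 - p) • ρ₂) ≤ p * cohWeight ρ₁ + (1 - p) * cohWeight ρ₂ := by
  obtain ⟨hp0, hp1⟩ := hp
  have hq0 : (0:ℝ) ≤ 1 - p := by linarith
  -- the sets are nonempty (take s = 1, σ = maximally mixed)
  have hd : 0 < d := by
    by_contra h
    have : d = 0 := by omega
    subst this
    have := hρ₁.2
    simp [Matrix.trace] at this
  have hmix : IsDensity ((d : ℝ)⁻¹ • (1 : Matrix (Fin d) (Fin d) ℂ)) := by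
    constructor
    · exact psd_rsmul Matrix.PosSemidef.one (by positivity)
    · have hdc : ((d:ℝ)) ≠ 0 := by positivity
      rw [trace_smul, Matrix.trace_one]
      rw [show ((Fintype.card (Fin d)) : ℂ) = ((d:ℝ):ℂ) by push_cast; simp]
      rw [Complex.real_smul, ← Complex.ofReal_mul, inv_mul_cancel₀ hdc, Complex.ofReal_one]
  have mem_one : ∀ (ρ : Matrix (Fin d) (Fin d) ℂ), IsDensity ρ →
      (1:ℝ) ∈ {s : ℝ | s ∈ Set.Icc (0 : ℝ) 1 ∧
      ∃ σ τ : Matrix (Fin d) (Fin d) ℂ, IsDensity σ ∧ IsIncoherent σ ∧ IsDensity τ ∧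
        ρ = (1 - s) • σ + s • τ} := by
    intro ρ hρ
    refine ⟨⟨zero_le_one, le_refl _⟩, (d : ℝ)⁻¹ • 1, ρ, hmix, ?_, hρ, by simp⟩
    intro i j hij
    simp [Matrix.one_apply_ne hij]
  have ne₁ := Set.nonempty_of_mem (mem_one ρ₁ hρ₁)
  have ne₂ := Set.nonempty_of_mem (mem_one ρ₂ hρ₂)
  have bdd : ∀ (ρ : Matrix (Fin d) (Fin d) ℂ), BddBelow {s : ℝ | s ∈ Set.Icc (0 : ℝ) 1 ∧
      ∃ σ τ : Matrix (Fin d) (Fin d) ℂ, IsDensity σ ∧ IsIncoherent σ ∧ IsDensity τ ∧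
        ρ = (1 - s) • σ + s • τ} := fun ρ => ⟨0, fun x hx => hx.1.1⟩
  refine le_of_forall_pos_le_add ?_
  intro ε hε
  obtain ⟨s₁, hs₁, hlt₁⟩ := Real.lt_sInf_add_pos ne₁ (half_pos hε)
  obtain ⟨s₂, hs₂, hlt₂⟩ := Real.lt_sInf_add_pos ne₂ (half_pos hε)
  have hmem := mem_comb (n := Fin d) ⟨hp0, hp1⟩ hs₁ hs₂
  have h1 : cohWeight (p • ρ₁ + (1 - p) • ρ₂) ≤ p * s₁ + (1 - p) * s₂ :=
    csInf_le (bdd _) hmem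
  have h2 : p * s₁ ≤ p * (cohWeight ρ₁ + ε / 2) :=
    mul_le_mul_of_nonneg_left (le_of_lt hlt₁) hp0
  have h3 : (1 - p) * s₂ ≤ (1 - p) * (cohWeight ρ₂ + ε / 2) :=
    mul_le_mul_of_nonneg_left (le_of_lt hlt₂) hq0
  unfold cohWeight at *
  nlinarith
end
end

section
/- Let {K_i}_{i∈I} (I finite) be d×d complex matrices with Σ_i K_i† K_i = I such that each K_i is incoherence-preserving: for every diagonal positive semidefinite matrix σ, the matrix K_i σ K_i† is diagonal. Then for every density matrix ρ on ℂ^d, C_w(ρ) ≥ Σ_{i : p_i > 0} p_i · C_w(ρ_i), where p_i = Tr(K_i ρ K_i†) and ρ_i = K_i ρ K_i† / p_i. -/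
open Matrix BigOperators
open scoped ComplexOrder

noncomputable section

namespace CohAux

variable {n : Type*} [Fintype n] [DecidableEq n]

lemma diag_nonneg {M : Matrix n n ℂ} (hM : M.PosSemidef) (i : n) : 0 ≤ M i i := by
  have := hM.dotProduct_mulVec_nonneg (Pi.single i 1)
  simpa [Matrix.mulVec_single, dotProduct, Pi.single_apply] using this

lemma trace_nonneg {M : Matrix n n ℂ} (hM : M.PosSemidef) : 0 ≤ M.trace :=
  Finset.sum_nonneg fun i _ => diag_nonneg hM i

lemma trace_re_nonneg {M : Matrix n n ℂ} (hM : M.PosSemidef) : 0 ≤ M.trace.re :=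
  (Complex.nonneg_iff.mp (trace_nonneg hM)).1

lemma trace_eq_re {M : Matrix n n ℂ} (hM : M.PosSemidef) : M.trace = (M.trace.re : ℂ) := by
  have h := Complex.nonneg_iff.mp (trace_nonneg hM)
  exact Complex.ext rfl (by simp [← h.2])

lemma smul_posSemidef {M : Matrix n n ℂ} (hM : M.PosSemidef) {c : ℝ} (hc : 0 ≤ c) :
    (c • M).PosSemidef := by
  constructor
  · exact (conjTranspose_smul c M).trans (by rw [star_trivial, hM.1])
  · intro x
    exact (hM.smul hc).2 x

lemma eq_zero_of_trace_eq_zero {M : Matrix n n ℂ} (hM : M.PosSemidef) (h : M.trace.re = 0) :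
    M = 0 := by
  have htr : M.trace = 0 := by rw [trace_eq_re hM, h, Complex.ofReal_zero]
  obtain ⟨B, rfl⟩ : ∃ B : Matrix n n ℂ, M = Bᴴ * B := by
    open scoped MatrixOrder in
    exact ⟨CFC.sqrt M, by rw [← Matrix.star_eq_conjTranspose, (CFC.sqrt_nonneg M).isSelfAdjoint.star_eq, CFC.sqrt_mul_sqrt_self M hM.nonneg]⟩
  have hB : B = 0 := by
    have h1 : (Bᴴ * B).trace = (↑(∑ j : n, ∑ i : n, Complex.normSq (B i j)) : ℂ) := by
      push_cast
      simp only [Matrix.trace, Matrix.diag, Matrix.mul_apply, Matrix.conjTranspose_apply,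
        Complex.normSq_eq_conj_mul_self]
      rfl
    rw [htr] at h1
    have h2 : ∑ j : n, ∑ i : n, Complex.normSq (B i j) = 0 := by exact_mod_cast h1.symm
    ext i j
    have h3 := (Finset.sum_eq_zero_iff_of_nonneg (fun j _ =>
      Finset.sum_nonneg fun i _ => Complex.normSq_nonneg _)).mp h2 j (Finset.mem_univ j)
    have h4 := (Finset.sum_eq_zero_iff_of_nonneg (fun i _ =>
      Complex.normSq_nonneg _)).mp h3 i (Finset.mem_univ i)
    simpa using Complex.normSq_eq_zero.mp h4
  simp [hB]

lemma isDensity_inv_smul {M : Matrix n n ℂ} (hM : M.PosSemidef) (h : 0 < M.trace.re) :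
    IsDensity ((M.trace.re)⁻¹ • M) := by
  refine ⟨smul_posSemidef hM (inv_nonneg.mpr h.le), ?_⟩
  have : ((M.trace.re)⁻¹ • M).trace = ((M.trace.re)⁻¹ : ℂ) * M.trace := by
    rw [trace_smul, Complex.real_smul, Complex.ofReal_inv]
  have h2 : M.trace = (M.trace.re : ℂ) := trace_eq_re hM
  set r := M.trace.re with hr
  rw [this, h2, ← Complex.ofReal_inv, ← Complex.ofReal_mul,
    inv_mul_cancel₀ h.ne', Complex.ofReal_one]

lemma cohWeight_le_of_decomp {ρ σ τ : Matrix n n ℂ} {s : ℝ} (h0 : 0 ≤ s) (h1 : s ≤ 1)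
    (hσ : IsDensity σ) (hσi : IsIncoherent σ) (hτ : IsDensity τ)
    (hdecomp : ρ = (1 - s) • σ + s • τ) : cohWeight ρ ≤ s :=
  csInf_le ⟨0, fun _ hx => hx.1.1⟩ ⟨⟨h0, h1⟩, σ, τ, hσ, hσi, hτ, hdecomp⟩

lemma incoherent_smul {A : Matrix n n ℂ} (h : IsIncoherent A) (c : ℝ) :
    IsIncoherent (c • A) := fun i j hij => by
  rw [Matrix.smul_apply, h i j hij, smul_zero]

end CohAux

theorem cohWeight_monotone_incoherent_operation {d : ℕ}
    {ι : Type*} [Fintype ι] (K : ι → Matrix (Fin d) (Fin d) ℂ)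
    (hK : ∑ i : ι, (K i)ᴴ * K i = 1)
    (hinc : ∀ (i : ι) (σ : Matrix (Fin d) (Fin d) ℂ),
      σ.PosSemidef → IsIncoherent σ → IsIncoherent (K i * σ * (K i)ᴴ))
    (ρ : Matrix (Fin d) (Fin d) ℂ) (hρ : IsDensity ρ) :
    ∑ i ∈ Finset.univ.filter
        (fun i : ι => 0 < ((K i * ρ * (K i)ᴴ).trace).re),
      ((K i * ρ * (K i)ᴴ).trace).re *
        cohWeight ((((K i * ρ * (K i)ᴴ).trace).re)⁻¹ • (K i * ρ * (K i)ᴴ))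
      ≤ cohWeight ρ := by
  classical
  set M : ι → Matrix (Fin d) (Fin d) ℂ := fun i => K i * ρ * (K i)ᴴ with hMdef
  set p : ι → ℝ := fun i => (M i).trace.re with hpdef
  -- the incoherent density given by the diagonal of ρ
  set σ₀ : Matrix (Fin d) (Fin d) ℂ := Matrix.diagonal (fun i => ρ i i) with hσ₀def
  have hσ₀d : IsDensity σ₀ := by
    refine ⟨Matrix.posSemidef_diagonal_iff.mpr (CohAux.diag_nonneg hρ.1), ?_⟩
    rw [hσ₀def, Matrix.trace_diagonal]
    exact hρ.2
  have hσ₀i : IsIncoherent σ₀ := fun i j hij => Matrix.diagonal_apply_ne _ hij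
  have hmem1 : (1 : ℝ) ∈ {s : ℝ | s ∈ Set.Icc (0 : ℝ) 1 ∧
      ∃ σ τ : Matrix (Fin d) (Fin d) ℂ,
        IsDensity σ ∧ IsIncoherent σ ∧ IsDensity τ ∧ ρ = (1 - s) • σ + s • τ} :=
    ⟨⟨zero_le_one, le_refl 1⟩, σ₀, ρ, hσ₀d, hσ₀i, hρ, by simp⟩
  rw [cohWeight]
  refine le_csInf ⟨1, hmem1⟩ ?_
  rintro s ⟨⟨hs0, hs1⟩, σ, τ, hσd, hσi, hτd, hdec⟩
  set Nσ : ι → Matrix (Fin d) (Fin d) ℂ := fun i => K i * σ * (K i)ᴴ with hNσdef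
  set Nτ : ι → Matrix (Fin d) (Fin d) ℂ := fun i => K i * τ * (K i)ᴴ with hNτdef
  set q : ι → ℝ := fun i => (Nσ i).trace.re with hqdef
  set r : ι → ℝ := fun i => (Nτ i).trace.re with hrdef
  have hNσpsd : ∀ i, (Nσ i).PosSemidef := fun i => hσd.1.mul_mul_conjTranspose_same (K i)
  have hNτpsd : ∀ i, (Nτ i).PosSemidef := fun i => hτd.1.mul_mul_conjTranspose_same (K i)
  have hMpsd : ∀ i, (M i).PosSemidef := fun i => hρ.1.mul_mul_conjTranspose_same (K i)
  have hqnn : ∀ i, 0 ≤ q i := fun i => CohAux.trace_re_nonneg (hNσpsd i)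
  have hrnn : ∀ i, 0 ≤ r i := fun i => CohAux.trace_re_nonneg (hNτpsd i)
  have hMdec : ∀ i, M i = (1 - s) • Nσ i + s • Nτ i := by
    intro i
    simp only [hMdef, hNσdef, hNτdef, hdec, Matrix.mul_add, Matrix.add_mul,
      Matrix.mul_smul, Matrix.smul_mul]
  have hp_eq : ∀ i, p i = (1 - s) * q i + s * r i := by
    intro i
    simp only [hpdef, hqdef, hrdef, hMdec i, Matrix.trace_add, Matrix.trace_smul,
      Complex.add_re, Complex.real_smul, Complex.mul_re, Complex.ofReal_re,
      Complex.ofReal_im, zero_mul, sub_zero]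
  have hsumr : ∑ i : ι, r i = 1 := by
    have h1 : ∑ i : ι, (Nτ i).trace = τ.trace := by
      calc ∑ i : ι, (Nτ i).trace
          = ∑ i : ι, ((K i)ᴴ * K i * τ).trace := by
            refine Finset.sum_congr rfl fun i _ => ?_
            rw [hNτdef]
            rw [Matrix.trace_mul_cycle]
        _ = ((∑ i : ι, (K i)ᴴ * K i) * τ).trace := by
            rw [Matrix.sum_mul, Matrix.trace_sum]
        _ = τ.trace := by rw [hK, Matrix.one_mul]
    have h2 : (∑ i : ι, (Nτ i).trace).re = (1 : ℂ).re := by rw [h1, hτd.2]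
    simpa [hrdef, Complex.re_sum] using h2
  have key : ∀ i : ι, 0 < p i →
      p i * cohWeight ((p i)⁻¹ • M i) ≤ s * r i := by
    intro i hp
    have hsr_le : s * r i ≤ p i := by
      have h0 : 0 ≤ (1 - s) * q i := mul_nonneg (by linarith) (hqnn i)
      rw [hp_eq i]; linarith
    have hcw : cohWeight ((p i)⁻¹ • M i) ≤ s * r i / p i := by
      by_cases hq0 : q i = 0
      · -- the incoherent part vanishes
        have hN0 : Nσ i = 0 := CohAux.eq_zero_of_trace_eq_zero (hNσpsd i) hq0
        have hpi : p i = s * r i := by rw [hp_eq i, hq0]; ring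
        have ht1 : s * r i / p i = 1 := by rw [hpi]; exact div_self (hpi ▸ hp.ne')
        rw [ht1]
        refine CohAux.cohWeight_le_of_decomp zero_le_one (le_refl 1) hσ₀d hσ₀i
          (CohAux.isDensity_inv_smul (hMpsd i) hp) ?_
        simp
        rfl
      · have hqpos : 0 < q i := lt_of_le_of_ne (hqnn i) (Ne.symm hq0)
        by_cases hr0 : r i = 0
        · -- the noise part vanishes: the state is already incoherent
          have hN0 : Nτ i = 0 := CohAux.eq_zero_of_trace_eq_zero (hNτpsd i) hr0
          have hpi : p i = (1 - s) * q i := by rw [hp_eq i, hr0]; ring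
          have h1s : (1 - s) ≠ 0 := by
            intro h; rw [hpi, h, zero_mul] at hp; exact lt_irrefl 0 hp
          have hρieq : (p i)⁻¹ • M i = (q i)⁻¹ • Nσ i := by
            rw [hMdec i, hN0, smul_zero, add_zero, smul_smul, hpi]
            congr 1
            field_simp
          have hσ'd : IsDensity ((q i)⁻¹ • Nσ i) :=
            CohAux.isDensity_inv_smul (hNσpsd i) hqpos
          have hσ'i : IsIncoherent ((q i)⁻¹ • Nσ i) :=
            CohAux.incoherent_smul (hinc i σ hσd.1 hσi) _
          have ht0 : s * r i / p i = 0 := by rw [hr0]; simp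
          rw [ht0]
          refine CohAux.cohWeight_le_of_decomp (le_refl 0) zero_le_one hσ'd hσ'i hσ'd ?_
          rw [hρieq]; simp
        · have hrpos : 0 < r i := lt_of_le_of_ne (hrnn i) (Ne.symm hr0)
          set t := s * r i / p i with htdef
          have ht0 : 0 ≤ t := div_nonneg (mul_nonneg hs0 (hrnn i)) hp.le
          have ht1 : t ≤ 1 := (div_le_one hp).mpr hsr_le
          have hσ'd : IsDensity ((q i)⁻¹ • Nσ i) :=
            CohAux.isDensity_inv_smul (hNσpsd i) hqpos
          have hσ'i : IsIncoherent ((q i)⁻¹ • Nσ i) :=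
            CohAux.incoherent_smul (hinc i σ hσd.1 hσi) _
          have hτ'd : IsDensity ((r i)⁻¹ • Nτ i) :=
            CohAux.isDensity_inv_smul (hNτpsd i) hrpos
          refine CohAux.cohWeight_le_of_decomp ht0 ht1 hσ'd hσ'i hτ'd ?_
          have hpne : (1 - s) * q i + s * r i ≠ 0 := by rw [← hp_eq i]; exact hp.ne'
          have c1 : (1 - t) * (q i)⁻¹ = (p i)⁻¹ * (1 - s) := by
            rw [htdef, hp_eq i]
            field_simp
            ring
          have c2 : t * (r i)⁻¹ = (p i)⁻¹ * s := by
            rw [htdef, hp_eq i]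
            field_simp
          rw [hMdec i, smul_add, smul_smul, smul_smul, smul_smul, smul_smul, c1, c2]
    calc p i * cohWeight ((p i)⁻¹ • M i) ≤ p i * (s * r i / p i) :=
          mul_le_mul_of_nonneg_left hcw hp.le
      _ = s * r i := by field_simp
  calc ∑ i ∈ Finset.univ.filter (fun i : ι => 0 < p i),
        p i * cohWeight ((p i)⁻¹ • M i)
      ≤ ∑ i ∈ Finset.univ.filter (fun i : ι => 0 < p i), s * r i :=
        Finset.sum_le_sum fun i hi => key i (Finset.mem_filter.mp hi).2
    _ ≤ ∑ i : ι, s * r i :=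
        Finset.sum_le_sum_of_subset_of_nonneg (Finset.filter_subset _ _)
          (fun i _ _ => mul_nonneg hs0 (hrnn i))
    _ = s := by rw [← Finset.mul_sum, hsumr, mul_one]
end
end

section
/- For every density matrix ρ on ℂ^d, C_w(ρ) ≥ ‖ρ − Δ(ρ)‖₂² / ‖ρ‖_∞ ≥ ‖ρ − Δ(ρ)‖₂², where ‖A‖₂² = Tr(A†A) is the squared Hilbert–Schmidt norm and ‖ρ‖_∞ is the largest eigenvalue of ρ. -/
open Matrix BigOperators
open scoped ComplexOrder

noncomputable section

/-- The dephasing (complete decoherence) map: keep only the diagonal. -/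
def dephase {n : Type*} [DecidableEq n] (X : Matrix n n ℂ) : Matrix n n ℂ :=
  Matrix.diagonal (fun i => X i i)

namespace CohAux

variable {n : Type*} [Fintype n] [DecidableEq n]

lemma trace_mul_re_nonneg {P Q : Matrix n n ℂ} (hP : P.PosSemidef) (hQ : Q.PosSemidef) :
    0 ≤ ((P * Q).trace).re := by
  open scoped MatrixOrder Matrix.Norms.L2Operator in
  obtain ⟨B, rfl⟩ := CStarAlgebra.nonneg_iff_eq_star_mul_self.mp hP.nonneg
  rw [Matrix.mul_assoc, Matrix.trace_mul_comm]
  exact trace_re_nonneg (hQ.mul_mul_conjTranspose_same B)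

lemma dim_pos {d : ℕ} {ρ : Matrix (Fin d) (Fin d) ℂ} (hρ : IsDensity ρ) : 0 < d := by
  rcases Nat.eq_zero_or_pos d with h | h
  · subst h
    have := hρ.2
    simp [Matrix.trace] at this
  · exact h

lemma maxEig_spec {d : ℕ} {ρ : Matrix (Fin d) (Fin d) ℂ} (hρ : IsDensity ρ) :
    0 < maxEigenvalue ρ ∧ maxEigenvalue ρ ≤ 1 ∧
      Matrix.PosSemidef (((maxEigenvalue ρ : ℝ) : ℂ) • 1 - ρ) := by
  obtain ⟨hpsd, htr⟩ := hρ
  have hH : ρ.IsHermitian := hpsd.isHermitian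
  have hd : 0 < d := dim_pos ⟨hpsd, htr⟩
  haveI : Nonempty (Fin d) := Fin.pos_iff_nonempty.mp hd
  set eig := hH.eigenvalues with heig
  have hsum : ∑ i, eig i = 1 := by
    have h1 : ρ.trace = ∑ i, (eig i : ℂ) := by
      conv_lhs => rw [hH.spectral_theorem]
      rw [Unitary.conjStarAlgAut_apply, Matrix.trace_mul_cycle, Unitary.coe_star_mul_self, one_mul, Matrix.trace_diagonal]
      rfl
    rw [htr] at h1
    have h2 : ((∑ i, eig i : ℝ) : ℂ) = 1 := by push_cast; rw [← h1]
    exact_mod_cast h2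
  have heignn : ∀ i, 0 ≤ eig i := fun i => hpsd.eigenvalues_nonneg i
  obtain ⟨i₀, hi₀⟩ := Finite.exists_max eig
  set m := eig i₀ with hm
  have hBpsd : Matrix.PosSemidef (((m : ℝ) : ℂ) • 1 - ρ) := by
    have hdiag : Matrix.PosSemidef (Matrix.diagonal (fun i => ((m - eig i : ℝ) : ℂ))) :=
      Matrix.PosSemidef.diagonal (fun i => Complex.zero_le_real.mpr (sub_nonneg.mpr (hi₀ i)))
    have hconj := hdiag.mul_mul_conjTranspose_same
      (hH.eigenvectorUnitary : Matrix (Fin d) (Fin d) ℂ)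
    have hUU : (hH.eigenvectorUnitary : Matrix (Fin d) (Fin d) ℂ) *
        (hH.eigenvectorUnitary : Matrix (Fin d) (Fin d) ℂ)ᴴ = 1 := by
      exact Unitary.coe_mul_star_self hH.eigenvectorUnitary
    have hdd : (Matrix.diagonal fun i => ((m - eig i : ℝ) : ℂ)) =
        ((m : ℝ) : ℂ) • (1 : Matrix (Fin d) (Fin d) ℂ)
          - Matrix.diagonal (RCLike.ofReal ∘ hH.eigenvalues) := by
      ext i j
      by_cases h : i = j <;>
        simp [h, heig, Matrix.diagonal_apply, Matrix.one_apply, Function.comp, Complex.ofReal_sub]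
    have hkey : ((m : ℝ) : ℂ) • (1 : Matrix (Fin d) (Fin d) ℂ) - ρ =
        (hH.eigenvectorUnitary : Matrix (Fin d) (Fin d) ℂ) *
          (Matrix.diagonal fun i => ((m - eig i : ℝ) : ℂ)) *
          (hH.eigenvectorUnitary : Matrix (Fin d) (Fin d) ℂ)ᴴ := by
      rw [hdd, Matrix.mul_sub, Matrix.sub_mul, Matrix.mul_smul, Matrix.mul_one,
        Matrix.smul_mul, hUU]
      congr 1
      exact hH.spectral_theorem.trans (Unitary.conjStarAlgAut_apply _ _)
    rw [hkey]
    exact hconj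
  set E := {r : ℝ | ∃ v : Fin d → ℂ, v ≠ 0 ∧ ρ.mulVec v = (r : ℂ) • v} with hE
  have hub : ∀ r ∈ E, r ≤ m := by
    rintro r ⟨v, hv, hvec⟩
    have h0 := hBpsd.dotProduct_mulVec_nonneg v
    have hmul : (((m : ℝ) : ℂ) • 1 - ρ) *ᵥ v = (((m - r : ℝ)) : ℂ) • v := by
      rw [Matrix.sub_mulVec, hvec, Matrix.smul_mulVec, Matrix.one_mulVec]
      push_cast
      rw [sub_smul]
    rw [hmul, dotProduct_smul] at h0
    have hN : star v ⬝ᵥ v = ((∑ i, Complex.normSq (v i) : ℝ) : ℂ) := by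
      push_cast
      simp [dotProduct, Complex.normSq_eq_conj_mul_self]
    have hNpos : 0 < ∑ i, Complex.normSq (v i) := by
      obtain ⟨i, hi⟩ : ∃ i, v i ≠ 0 := by
        by_contra hc
        push_neg at hc
        exact hv (funext hc)
      exact Finset.sum_pos' (fun j _ => Complex.normSq_nonneg _)
        ⟨i, Finset.mem_univ i, Complex.normSq_pos.mpr hi⟩
    rw [hN, smul_eq_mul, ← Complex.ofReal_mul] at h0
    have := Complex.zero_le_real.mp h0
    nlinarith
  have hmem : m ∈ E := by
    refine ⟨⇑(hH.eigenvectorBasis i₀), ?_, ?_⟩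
    · intro hc
      apply hH.eigenvectorBasis.orthonormal.ne_zero i₀
      ext x
      exact congrFun hc x
    · rw [hH.mulVec_eigenvectorBasis]
      ext x
      simp [Complex.real_smul, hm, heig]
  have hsup : maxEigenvalue ρ = m := by
    rw [maxEigenvalue]
    exact IsGreatest.csSup_eq ⟨hmem, hub⟩
  have hm1 : m ≤ 1 := by
    rw [← hsum]
    exact Finset.single_le_sum (fun i _ => heignn i) (Finset.mem_univ i₀)
  have hmpos : 0 < m := by
    have h1 : (1 : ℝ) ≤ (d : ℝ) * m := by
      rw [← hsum]
      calc ∑ i, eig i ≤ ∑ _i : Fin d, m := Finset.sum_le_sum fun i _ => hi₀ i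
        _ = (d : ℝ) * m := by simp [Finset.sum_const, mul_comm]
      
    by_contra h
    push_neg at h
    nlinarith [(Nat.cast_pos (α := ℝ)).mpr hd]
  rw [hsup]
  exact ⟨hmpos, hm1, hBpsd⟩

lemma one_mem {d : ℕ} {ρ : Matrix (Fin d) (Fin d) ℂ} (hρ : IsDensity ρ) :
    (1 : ℝ) ∈ {s : ℝ | s ∈ Set.Icc (0 : ℝ) 1 ∧
      ∃ σ τ : Matrix (Fin d) (Fin d) ℂ,
        IsDensity σ ∧ IsIncoherent σ ∧ IsDensity τ ∧
        ρ = (1 - s) • σ + s • τ} := by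
  have hd : 0 < d := dim_pos hρ
  set q : ℝ := (d : ℝ)⁻¹ with hq
  refine ⟨by simp, Matrix.diagonal (fun _ => (q : ℂ)), ρ, ⟨?_, ?_⟩, ?_, hρ, ?_⟩
  · exact Matrix.posSemidef_diagonal_iff.mpr fun i =>
      Complex.zero_le_real.mpr (inv_nonneg.mpr (Nat.cast_nonneg d))
  · rw [Matrix.trace_diagonal, Finset.sum_const, Finset.card_univ, Fintype.card_fin,
      nsmul_eq_mul, hq]
    have hdne : (d : ℂ) ≠ 0 := Nat.cast_ne_zero.mpr hd.ne'
    push_cast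
    field_simp
  · intro i j h
    exact Matrix.diagonal_apply_ne _ h
  · simp

lemma key {d : ℕ} {ρ : Matrix (Fin d) (Fin d) ℂ} (hρ : IsDensity ρ) {s : ℝ}
    (hs0 : 0 ≤ s) {σ τ : Matrix (Fin d) (Fin d) ℂ} (hσi : IsIncoherent σ)
    (hτ : IsDensity τ) (hdec : ρ = (1 - s) • σ + s • τ) :
    (((ρ - dephase ρ)ᴴ * (ρ - dephase ρ)).trace).re ≤ s * maxEigenvalue ρ := by
  obtain ⟨hlpos, hl1, hBpsd⟩ := maxEig_spec hρ
  set lam := maxEigenvalue ρ with hlam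
  set A := ρ - dephase ρ with hA
  have hH : ρ.IsHermitian := hρ.1.isHermitian
  have hAdiag : ∀ i, A i i = 0 := by
    intro i
    simp [hA, dephase, Matrix.sub_apply, Matrix.diagonal_apply_eq]
  have hAoff : ∀ i j, i ≠ j → A i j = ρ i j := by
    intro i j h
    simp [hA, dephase, Matrix.sub_apply, Matrix.diagonal_apply_ne _ h]
  have hρoff : ∀ i j, i ≠ j → ρ i j = (s : ℂ) * τ i j := by
    intro i j h
    rw [hdec]
    simp [Matrix.add_apply, Matrix.smul_apply, hσi i j h, Complex.real_smul]
  have hconjA : ∀ i j, star (A j i) = A i j := by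
    intro i j
    by_cases h : j = i
    · subst h; rw [hAdiag]; simp [hAdiag]
    · rw [hAoff j i h, hAoff i j (Ne.symm h)]
      have := congrFun (congrFun hH.eq i) j
      simpa [Matrix.conjTranspose_apply] using this
  have htraceid : ((Aᴴ * A).trace) = (s : ℂ) * ((A * τ).trace) := by
    rw [Matrix.trace, Matrix.trace]
    simp only [Matrix.diag_apply, Matrix.mul_apply, Matrix.conjTranspose_apply]
    rw [Finset.mul_sum]
    refine Finset.sum_congr rfl fun i _ => ?_
    rw [Finset.mul_sum]
    refine Finset.sum_congr rfl fun j _ => ?_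
    by_cases h : j = i
    · subst h; simp [hAdiag]
    · rw [hconjA i j, hAoff j i h, hρoff j i h]
      ring
  have hsplit : (A * τ).trace = (ρ * τ).trace - ((dephase ρ) * τ).trace := by
    rw [hA, Matrix.sub_mul, Matrix.trace_sub]
  have h2 : ((ρ * τ).trace).re ≤ lam := by
    have h0 := trace_mul_re_nonneg hBpsd hτ.1
    have hexp : (((lam : ℝ) : ℂ) • 1 - ρ) * τ = ((lam : ℝ) : ℂ) • τ - ρ * τ := by
      rw [Matrix.sub_mul, Matrix.smul_mul, Matrix.one_mul]
    rw [hexp, Matrix.trace_sub, Matrix.trace_smul, hτ.2] at h0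
    simp only [smul_eq_mul, mul_one, Complex.sub_re, Complex.ofReal_re] at h0
    linarith
  have h3 : 0 ≤ (((dephase ρ) * τ).trace).re := by
    refine trace_mul_re_nonneg ?_ hτ.1
    exact Matrix.PosSemidef.diagonal fun i => diag_nonneg hρ.1 i
  have h4 : ((A * τ).trace).re ≤ lam := by
    rw [hsplit, Complex.sub_re]
    linarith
  calc (((ρ - dephase ρ)ᴴ * (ρ - dephase ρ)).trace).re
      = ((s : ℂ) * ((A * τ).trace)).re := by rw [← htraceid]
    _ = s * ((A * τ).trace).re := by simp [Complex.mul_re]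
    _ ≤ s * lam := mul_le_mul_of_nonneg_left h4 hs0

end CohAux

theorem cohWeight_ge_HS_distance {d : ℕ}
    (ρ : Matrix (Fin d) (Fin d) ℂ) (hρ : IsDensity ρ) :
    cohWeight ρ ≥
      (((ρ - dephase ρ)ᴴ * (ρ - dephase ρ)).trace).re / maxEigenvalue ρ ∧
    (((ρ - dephase ρ)ᴴ * (ρ - dephase ρ)).trace).re / maxEigenvalue ρ ≥
      (((ρ - dephase ρ)ᴴ * (ρ - dephase ρ)).trace).re := by
  obtain ⟨hlpos, hl1, hBpsd⟩ := CohAux.maxEig_spec hρ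
  have hHS : 0 ≤ (((ρ - dephase ρ)ᴴ * (ρ - dephase ρ)).trace).re :=
    CohAux.trace_re_nonneg (Matrix.posSemidef_conjTranspose_mul_self _)
  constructor
  · rw [ge_iff_le, cohWeight]
    refine le_csInf ⟨1, CohAux.one_mem hρ⟩ ?_
    rintro s ⟨⟨hs0, hs1⟩, σ, τ, hσd, hσi, hτd, hdec⟩
    rw [div_le_iff₀ hlpos]
    exact CohAux.key hρ hs0 hσi hτd hdec
  · rw [ge_iff_le, le_div_iff₀ hlpos]
    calc (((ρ - dephase ρ)ᴴ * (ρ - dephase ρ)).trace).re * maxEigenvalue ρ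
        ≤ (((ρ - dephase ρ)ᴴ * (ρ - dephase ρ)).trace).re * 1 :=
          mul_le_mul_of_nonneg_left hl1 hHS
      _ = _ := mul_one _
end
end

section
/- For every density matrix ρ on ℂ^d with d ≥ 2, the coherence weight dominates the rescaled robustness of coherence: C_w(ρ) ≥ C_R(ρ)/(d−1). (Here one uses that C_R(τ) ≤ d−1 for every density matrix τ on ℂ^d.) -/
open Matrix BigOperators
open scoped ComplexOrder

noncomputable section

/-- The robustness of coherence. -/
noncomputable def cohRobustness {n : Type*} [Fintype n] (ρ : Matrix n n ℂ) : ℝ :=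
  sInf {s : ℝ | 0 ≤ s ∧ ∃ τ : Matrix n n ℂ, IsDensity τ ∧
    IsIncoherent ((1 + s)⁻¹ • (ρ + s • τ))}

/-- The `l₁` norm of coherence: sum of absolute values of off-diagonal entries. -/
noncomputable def Cl1 {n : Type*} [Fintype n] [DecidableEq n] (ρ : Matrix n n ℂ) : ℝ :=
  ∑ i : n, ∑ j : n, if i = j then 0 else ‖ρ i j‖


lemma real_smul_matrix {n : Type*} (r : ℝ) (A : Matrix n n ℂ) :
    r • A = (r : ℂ) • A := by
  ext i j
  simp [Complex.real_smul]

lemma psd_real_smul {n : Type*} [Fintype n] {A : Matrix n n ℂ} (hA : A.PosSemidef)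
    {r : ℝ} (hr : 0 ≤ r) : (r • A).PosSemidef := by
  rw [real_smul_matrix]
  refine ⟨?_, fun x => ?_⟩
  · unfold Matrix.IsHermitian
    rw [Matrix.conjTranspose_smul, hA.1.eq]
    congr 1
    simp [Complex.ext_iff]
  · exact (hA.smul (by exact_mod_cast hr : (0:ℂ) ≤ (r:ℂ))).2 x

lemma one_sub_psd {d : ℕ} {τ : Matrix (Fin d) (Fin d) ℂ} (hτ : IsDensity τ) :
    ((1 : Matrix (Fin d) (Fin d) ℂ) - τ).PosSemidef := by
  obtain ⟨hpsd, htr⟩ := hτ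
  have hH : τ.IsHermitian := hpsd.1
  set U := (hH.eigenvectorUnitary : Matrix (Fin d) (Fin d) ℂ) with hU
  have hU1 : U * star U = 1 := (Matrix.mem_unitaryGroup_iff).mp hH.eigenvectorUnitary.2
  have hU2 : star U * U = 1 := (Matrix.mem_unitaryGroup_iff').mp hH.eigenvectorUnitary.2
  have hspec := hH.spectral_theorem
  simp only [Unitary.conjStarAlgAut_apply, Unitary.coe_star] at hspec
  -- sum of eigenvalues is 1
  have htrsum : τ.trace = ∑ i, (hH.eigenvalues i : ℂ) := by
    conv_lhs => rw [hspec]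
    rw [Matrix.trace_mul_cycle]
    rw [show star (hH.eigenvectorUnitary : Matrix (Fin d) (Fin d) ℂ) *
        (hH.eigenvectorUnitary : Matrix (Fin d) (Fin d) ℂ) = 1 from hU2, Matrix.one_mul,
      Matrix.trace_diagonal]
    rfl
  have hsum : ∑ i, hH.eigenvalues i = 1 := by
    have : ((∑ i, hH.eigenvalues i : ℝ) : ℂ) = 1 := by
      push_cast
      rw [← htrsum, htr]
    exact_mod_cast this
  have hle : ∀ i, hH.eigenvalues i ≤ 1 := by
    intro i
    rw [← hsum]
    exact Finset.single_le_sum (fun j _ => hpsd.eigenvalues_nonneg j) (Finset.mem_univ i)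
  have key : (1 : Matrix (Fin d) (Fin d) ℂ) - τ =
      U * Matrix.diagonal (fun i => ((1 - hH.eigenvalues i : ℝ) : ℂ)) * star U := by
    have hdiag : Matrix.diagonal (fun i => ((1 - hH.eigenvalues i : ℝ) : ℂ)) =
        1 - Matrix.diagonal (RCLike.ofReal ∘ hH.eigenvalues) := by
      rw [← Matrix.diagonal_one, Matrix.diagonal_sub]
      congr 1
      funext i
      push_cast
      rfl
    rw [hdiag, Matrix.mul_sub, Matrix.sub_mul, Matrix.mul_one, hU1, ← hspec]
  rw [key]
  have hdiagpsd : (Matrix.diagonal fun i => ((1 - hH.eigenvalues i : ℝ) : ℂ)).PosSemidef :=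
    Matrix.PosSemidef.diagonal (fun i => by
      have h : (0:ℝ) ≤ 1 - hH.eigenvalues i := by linarith [hle i]
      show (0:ℂ) ≤ _
      exact_mod_cast h)
  simpa [Matrix.star_eq_conjTranspose] using hdiagpsd.mul_mul_conjTranspose_same U

theorem cohWeight_ge_robustness_div {d : ℕ} (hd : 2 ≤ d)
    (ρ : Matrix (Fin d) (Fin d) ℂ) (hρ : IsDensity ρ) :
    cohWeight ρ ≥ cohRobustness ρ / ((d : ℝ) - 1) := by
  have hd0 : (0:ℝ) < (d:ℝ) - 1 := by
    have : (2:ℝ) ≤ d := by exact_mod_cast hd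
    linarith
  have hdC : ((d:ℝ) - 1 : ℂ) ≠ 0 := by
    exact_mod_cast Complex.ofReal_ne_zero.mpr (ne_of_gt hd0)
  rw [ge_iff_le]
  unfold cohWeight
  apply le_csInf
  · -- nonempty: s = 1
    refine ⟨1, ⟨by norm_num, (d:ℝ)⁻¹ • 1, ρ, ⟨?_, ?_⟩, ?_, hρ, by simp⟩⟩
    · exact psd_real_smul Matrix.PosSemidef.one (by positivity)
    · rw [Matrix.trace_smul, Matrix.trace_one]
      simp only [Fintype.card_fin, smul_eq_mul]
      rw [Complex.real_smul]
      push_cast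
      rw [inv_mul_cancel₀]
      exact_mod_cast Nat.cast_ne_zero.mpr (by omega)
    · intro i j hij
      simp [Matrix.smul_apply, Matrix.one_apply_ne hij]
  · rintro s ⟨⟨hs0, hs1⟩, σ, τ, hσd, hσinc, hτd, hrho⟩
    rw [div_le_iff₀ hd0]
    apply csInf_le
    · exact ⟨0, fun x hx => hx.1⟩
    refine ⟨mul_nonneg hs0 hd0.le, ((d:ℝ) - 1)⁻¹ • (1 - τ), ⟨?_, ?_⟩, ?_⟩
    · exact psd_real_smul (one_sub_psd hτd) (by positivity)
    · rw [Matrix.trace_smul, Matrix.trace_sub, Matrix.trace_one, hτd.2]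
      simp only [Fintype.card_fin, smul_eq_mul]
      rw [Complex.real_smul]
      push_cast
      rw [inv_mul_cancel₀ (by exact_mod_cast ne_of_gt hd0)]
    · intro i j hij
      have hσ0 : σ i j = 0 := hσinc i j hij
      have h1 : (1 : Matrix (Fin d) (Fin d) ℂ) i j = 0 := Matrix.one_apply_ne hij
      have hρij : ρ i j = (s : ℂ) * τ i j := by
        rw [hrho]
        simp [Matrix.add_apply, Matrix.smul_apply, hσ0, Complex.real_smul]
      simp only [Matrix.smul_apply, Matrix.add_apply, Matrix.sub_apply, h1, hρij,
        Complex.real_smul, smul_eq_mul]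
      rw [mul_eq_zero]
      right
      have hne : ((d:ℂ) - 1) ≠ 0 := by exact_mod_cast ne_of_gt hd0
      push_cast
      field_simp
      ring
end
end

section
/- For every density matrix ρ on ℂ^d with d ≥ 2, the coherence weight dominates the rescaled l₁ norm of coherence: C_w(ρ) ≥ C_{l₁}(ρ)/(d−1). (Here one uses that C_{l₁}(τ) ≤ d−1 for every density matrix τ on ℂ^d.) -/
open Matrix BigOperators
open scoped ComplexOrder

noncomputable section

lemma diag_re_nonneg' {n : Type*} [Fintype n] [DecidableEq n] {M : Matrix n n ℂ}
    (hM : M.PosSemidef) (i : n) : 0 ≤ (M i i).re := by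
  have := hM.dotProduct_mulVec_nonneg (Pi.single i 1)
  simp [dotProduct, mulVec, Pi.single_apply] at this
  simpa using (Complex.le_def.mp this).1

lemma quad_expand' {n : Type*} [Fintype n] [DecidableEq n] (M : Matrix n n ℂ)
    {i j : n} (hij : i ≠ j) (a b : ℂ) :
    dotProduct (star (Pi.single i a + Pi.single j b)) (M *ᵥ (Pi.single i a + Pi.single j b))
      = star a * a * M i i + star a * b * M i j + star b * a * M j i + star b * b * M j j := by
  simp only [dotProduct, mulVec, Pi.star_apply, Pi.add_apply, Pi.single_apply]
  rw [Finset.sum_eq_add_of_mem i j (Finset.mem_univ _) (Finset.mem_univ _) hij ?_]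
  · simp only [dotProduct]
    rw [Finset.sum_eq_add_of_mem i j (Finset.mem_univ _) (Finset.mem_univ _) hij ?_,
        Finset.sum_eq_add_of_mem i j (Finset.mem_univ _) (Finset.mem_univ _) hij ?_]
    · simp [hij, hij.symm]; ring
    all_goals intro k _ hk; simp [hk.1, hk.2]
  · intro k _ hk; simp [hk.1, hk.2]

lemma offdiag_bound' {n : Type*} [Fintype n] [DecidableEq n] {M : Matrix n n ℂ}
    (hM : M.PosSemidef) {i j : n} (hij : i ≠ j) :
    2 * ‖M i j‖ ≤ (M i i).re + (M j j).re := by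
  by_cases hb : M i j = 0
  · have h1 := diag_re_nonneg' hM i
    have h2 := diag_re_nonneg' hM j
    simp [hb]; linarith
  · set b := M i j with hbdef
    set a : ℝ := ‖b‖ with ha
    have hapos : 0 < a := norm_pos_iff.mpr hb
    have hji : M j i = star b := (hM.1.apply j i).symm
    have hq := hM.dotProduct_mulVec_nonneg (Pi.single i ((a : ℂ)) + Pi.single j (-star b))
    rw [quad_expand' M hij] at hq
    have h1 : (starRingEnd ℂ) b * b = ((a : ℂ))^2 := by
      rw [← Complex.normSq_eq_conj_mul_self, Complex.normSq_eq_norm_sq, ha]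
      push_cast
      ring
    have key : star ((a:ℂ)) * (a:ℂ) * M i i + star ((a:ℂ)) * (-star b) * M i j
        + star (-star b) * (a:ℂ) * M j i + star (-star b) * (-star b) * M j j
        = ((a^2 : ℝ) : ℂ) * M i i + ((a^2 : ℝ) : ℂ) * M j j - ((2 * a^3 : ℝ) : ℂ) := by
      rw [hji, ← hbdef]
      simp only [star_neg, star_star, Complex.star_def, Complex.conj_ofReal]
      push_cast
      simp only [Complex.conj_conj]
      linear_combination (M j j - 2 * (a:ℂ)) * h1
    rw [key] at hq
    have hq' := (Complex.le_def.mp hq).1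
    simp only [Complex.sub_re, Complex.add_re, Complex.re_ofReal_mul, Complex.zero_re, Complex.ofReal_re] at hq'
    nlinarith [mul_pos hapos hapos, hq']

lemma Cl1_le_of_density {d : ℕ} (τ : Matrix (Fin d) (Fin d) ℂ) (hτ : IsDensity τ) :
    Cl1 τ ≤ (d : ℝ) - 1 := by
  set r : Fin d → ℝ := fun i => (τ i i).re with hr
  have hsum : ∑ i, r i = 1 := by
    have h := hτ.2
    have := congrArg Complex.re h
    rw [Matrix.trace] at this
    simpa [Matrix.diag, Complex.re_sum, r] using this
  have step1 : Cl1 τ ≤ ∑ i : Fin d, ∑ j : Fin d, (if i = j then 0 else (r i + r j) / 2) := by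
    apply Finset.sum_le_sum; intro i _
    apply Finset.sum_le_sum; intro j _
    by_cases h : i = j
    · simp [h]
    · simp only [h, if_false]
      have := offdiag_bound' hτ.1 h
      simp only [hr]; linarith
  have expand : ∀ i j : Fin d, (if i = j then (0:ℝ) else (r i + r j) / 2)
      = (r i + r j) / 2 - (if i = j then (r i + r j) / 2 else 0) := by
    intro i j; split <;> ring
  have step2 : ∑ i : Fin d, ∑ j : Fin d, (if i = j then (0:ℝ) else (r i + r j) / 2)
      = (d : ℝ) - 1 := by
    simp_rw [expand, Finset.sum_sub_distrib, Finset.sum_ite_eq, Finset.mem_univ, if_true]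
    have inner : ∀ i : Fin d, ∑ j : Fin d, (r i + r j) / 2 = ((d : ℝ) * r i + 1) / 2 := by
      intro i
      rw [← Finset.sum_div, Finset.sum_add_distrib, Finset.sum_const, hsum]
      simp [nsmul_eq_mul, mul_comm]
    simp_rw [inner]
    rw [← Finset.sum_div, ← Finset.sum_div, Finset.sum_add_distrib, Finset.sum_add_distrib,
      ← Finset.mul_sum, hsum, Finset.sum_const]
    simp only [nsmul_eq_mul, mul_one, Finset.card_univ, Fintype.card_fin]
    ring
  linarith [step1, step2.le, step2.ge]

theorem cohWeight_ge_l1_div {d : ℕ} (hd : 2 ≤ d)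
    (ρ : Matrix (Fin d) (Fin d) ℂ) (hρ : IsDensity ρ) :
    cohWeight ρ ≥ Cl1 ρ / ((d : ℝ) - 1) := by
  have hd1 : (0:ℝ) < (d : ℝ) - 1 := by
    have : (2:ℝ) ≤ (d:ℝ) := by exact_mod_cast hd
    linarith
  have hdne : (d : ℂ) ≠ 0 := by
    exact_mod_cast (Nat.cast_ne_zero (R := ℂ)).mpr (by omega)
  apply le_csInf
  · -- nonempty: s = 1 works
    refine ⟨1, ⟨by norm_num, ?_⟩⟩
    refine ⟨Matrix.diagonal (fun _ => (d : ℂ)⁻¹), ρ, ⟨?_, ?_⟩, ?_, hρ, by simp⟩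
    · exact Matrix.PosSemidef.diagonal fun i => by
        simp only [Pi.zero_apply]
        rw [show ((d:ℂ))⁻¹ = (((d:ℝ)⁻¹ : ℝ) : ℂ) by push_cast; ring, Complex.zero_le_real]
        positivity
    · simp [Matrix.trace, Matrix.diag]
      exact mul_inv_cancel₀ hdne
    · intro i j hij; simp [Matrix.diagonal, hij]
  · rintro s ⟨⟨hs0, hs1⟩, σ, τ, hσd, hσi, hτd, heq⟩
    have hoff : ∀ i j : Fin d, i ≠ j → ‖ρ i j‖ = s * ‖τ i j‖ := by
      intro i j hij
      have : ρ i j = (1 - s) • σ i j + s • τ i j := by rw [heq]; simp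
      rw [this, hσi i j hij, smul_zero, zero_add, norm_smul, Real.norm_eq_abs,
        abs_of_nonneg hs0]
    have hCl : Cl1 ρ = s * Cl1 τ := by
      unfold Cl1
      rw [Finset.mul_sum]
      refine Finset.sum_congr rfl fun i _ => ?_
      rw [Finset.mul_sum]
      refine Finset.sum_congr rfl fun j _ => ?_
      by_cases h : i = j
      · simp [h]
      · simp only [h, if_false]; exact hoff i j h
    rw [div_le_iff₀ hd1, hCl]
    exact mul_le_mul_of_nonneg_left (Cl1_le_of_density τ hτd) hs0
end
end

section
/- Let ρ be a density matrix on ℂ^d. Suppose there exist real phases φ_0, …, φ_{d−1} such that, with the diagonal unitary U = Σ_k e^{iφ_k}|k⟩⟨k|, the matrix ρ' = UρU† satisfies ρ'_{ij} = −|ρ_{ij}| for all i ≠ j. Then C_w(ρ) ≥ C_{l₁}(ρ). -/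
open Matrix BigOperators
open scoped ComplexOrder

noncomputable section

lemma diag_entry_nonneg {d : ℕ} {ρ : Matrix (Fin d) (Fin d) ℂ} (h : ρ.PosSemidef)
    (i : Fin d) : 0 ≤ ρ i i := by
  have := h.dotProduct_mulVec_nonneg (Pi.single i 1)
  simpa [dotProduct, mulVec, Pi.single_apply, Finset.sum_ite_eq] using this

theorem cohWeight_ge_l1_of_negative_phases {d : ℕ}
    (ρ : Matrix (Fin d) (Fin d) ℂ) (hρ : IsDensity ρ)
    (φ : Fin d → ℝ)
    (hphase : ∀ i j, i ≠ j →
      (Matrix.diagonal (fun k : Fin d => Complex.exp ((φ k : ℂ) * Complex.I)) * ρ *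
        (Matrix.diagonal (fun k : Fin d => Complex.exp ((φ k : ℂ) * Complex.I)))ᴴ) i j
        = -(‖ρ i j‖ : ℂ)) :
    cohWeight ρ ≥ Cl1 ρ := by
  set e : Fin d → ℂ := fun k => Complex.exp ((φ k : ℂ) * Complex.I) with he
  have heu : ∀ k, e k * star (e k) = 1 := by
    intro k
    rw [he, RCLike.star_def, Complex.mul_conj]
    norm_cast
    simp [Complex.normSq_eq_norm_sq, Complex.norm_exp_ofReal_mul_I]
  have hph : ∀ i j, i ≠ j → e i * ρ i j * star (e j) = -(‖ρ i j‖ : ℂ) := by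
    intro i j hij
    have := hphase i j hij
    simpa [Matrix.diagonal_conjTranspose, Matrix.mul_apply, Matrix.diagonal_apply,
      Finset.sum_ite_eq, Finset.sum_ite_eq', mul_assoc] using this
  -- the set is nonempty: s = 1 works with the diagonal part of ρ
  have hne : ({s : ℝ | s ∈ Set.Icc (0 : ℝ) 1 ∧
      ∃ σ τ : Matrix (Fin d) (Fin d) ℂ,
        IsDensity σ ∧ IsIncoherent σ ∧ IsDensity τ ∧
        ρ = (1 - s) • σ + s • τ}).Nonempty := by
    refine ⟨1, ⟨by norm_num, ?_⟩⟩
    refine ⟨Matrix.diagonal (fun i => ρ i i), ρ, ⟨?_, ?_⟩, ?_, hρ, by simp⟩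
    · exact Matrix.PosSemidef.diagonal fun i => diag_entry_nonneg hρ.1 i
    · simpa [Matrix.trace, Matrix.diag] using hρ.2
    · intro i j hij; simp [Matrix.diagonal_apply, hij]
  rw [ge_iff_le, cohWeight]
  refine le_csInf hne ?_
  rintro s ⟨⟨hs0, hs1⟩, σ, τ, hσd, hσi, hτd, hdecomp⟩
  rcases eq_or_lt_of_le hs0 with hs | hs
  · -- s = 0 : ρ is incoherent, Cl1 ρ = 0
    subst hs
    have hρσ : ρ = σ := by simpa using hdecomp
    have : Cl1 ρ = 0 := by
      rw [Cl1]
      refine Finset.sum_eq_zero fun i _ => Finset.sum_eq_zero fun j _ => ?_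
      by_cases hij : i = j
      · simp [hij]
      · simp [hij, hρσ, hσi i j hij]
    linarith
  · -- s > 0
    have hoff : ∀ i j, i ≠ j → ρ i j = (s : ℂ) * τ i j := by
      intro i j hij
      have := congrArg (fun M => M i j) hdecomp
      simpa [Matrix.add_apply, Matrix.smul_apply, hσi i j hij, Complex.real_smul] using this
    -- quadratic form of τ against v = star ∘ e
    have hq := hτd.1.dotProduct_mulVec_nonneg (fun k => star (e k))
    have hterm : ∀ i j, star (star (e i)) * (τ i j * star (e j)) =
        (if i = j then τ i j else 0) +
          (if i = j then 0 else -((s : ℂ)⁻¹ * ‖ρ i j‖)) := by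
      intro i j
      rw [star_star]
      by_cases hij : i = j
      · subst hij
        have : e i * (τ i i * star (e i)) = τ i i := by
          calc e i * (τ i i * star (e i)) = τ i i * (e i * star (e i)) := by ring
            _ = τ i i := by rw [heu]; ring
        rw [this]
        simp
      · simp only [if_neg hij, zero_add]
        have hτρ : τ i j = (s : ℂ)⁻¹ * ρ i j := by
          rw [hoff i j hij]
          field_simp
        rw [hτρ]
        have := hph i j hij
        calc e i * ((s:ℂ)⁻¹ * ρ i j * star (e j))
            = (s:ℂ)⁻¹ * (e i * ρ i j * star (e j)) := by ring
          _ = (s:ℂ)⁻¹ * (-(‖ρ i j‖:ℂ)) := by rw [this]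
          _ = -((s : ℂ)⁻¹ * ‖ρ i j‖) := by ring
    have hQ : (star (fun k => star (e k)) ⬝ᵥ τ *ᵥ (fun k => star (e k)))
        = 1 - (s : ℂ)⁻¹ * (Cl1 ρ : ℂ) := by
      have : (star (fun k => star (e k)) ⬝ᵥ τ *ᵥ (fun k => star (e k)))
          = ∑ i, ∑ j, star (star (e i)) * (τ i j * star (e j)) := by
        simp [dotProduct, mulVec, Finset.mul_sum, Pi.star_apply]
      rw [this]
      have hsplit : ∀ i : Fin d, ∑ j, star (star (e i)) * (τ i j * star (e j)) =
          τ i i + ∑ j, (if i = j then 0 else -((s : ℂ)⁻¹ * ‖ρ i j‖)) := by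
        intro i
        rw [Finset.sum_congr rfl fun j _ => hterm i j, Finset.sum_add_distrib]
        congr 1
        simp
      rw [Finset.sum_congr rfl fun i _ => hsplit i, Finset.sum_add_distrib]
      have htr : ∑ i, τ i i = 1 := hτd.2
      rw [htr]
      have : ∀ i j : Fin d, (if i = j then (0:ℂ) else -((s : ℂ)⁻¹ * ‖ρ i j‖)) =
          -((s:ℂ)⁻¹ * (if i = j then (0:ℝ) else ‖ρ i j‖ : ℝ)) := by
        intro i j; split_ifs <;> simp
      rw [Finset.sum_congr rfl fun i _ => Finset.sum_congr rfl fun j _ => this i j]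
      have hsum : ∑ i : Fin d, ∑ j : Fin d,
          -((s:ℂ)⁻¹ * ((if i = j then (0:ℝ) else ‖ρ i j‖ : ℝ) : ℂ)) =
          -((s:ℂ)⁻¹ * ∑ i : Fin d, ∑ j : Fin d,
            ((if i = j then (0:ℝ) else ‖ρ i j‖ : ℝ) : ℂ)) := by
        simp [Finset.mul_sum]
      rw [hsum, Cl1]
      push_cast
      ring
    rw [hQ] at hq
    have hre : (0:ℝ) ≤ 1 - s⁻¹ * Cl1 ρ := by
      have := hq.1
      simpa using this
    have hC : Cl1 ρ ≤ s := by
      have := mul_le_mul_of_nonneg_left hre (le_of_lt hs)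
      have h2 : s * (s⁻¹ * Cl1 ρ) = Cl1 ρ := by field_simp
      nlinarith [h2]
    exact hC
end
end

section
/- Let d ≥ 2 and α ∈ [0,1]. The d-dimensional Werner state ρ_W(α) = α(I − F)/(d(d−1)) + (1−α)I/d², a density matrix on ℂ^d ⊗ ℂ^d (indices in {0,…,d−1}×{0,…,d−1}) where F = Σ_{i,j} |ij⟩⟨ji| is the swap matrix, satisfies C_w(ρ_W(α)) = C_R(ρ_W(α)) = C_{l₁}(ρ_W(α)) = α, where coherence is measured in the product standard basis {|ij⟩}. -/
set_option linter.unusedSectionVars false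
set_option linter.unusedVariables false
set_option maxHeartbeats 1000000


open Matrix BigOperators
open scoped ComplexOrder

noncomputable section

/-- The swap operator `F = ∑ |ij⟩⟨ji|` on `ℂ^d ⊗ ℂ^d`. -/
def swapMatrix (d : ℕ) : Matrix (Fin d × Fin d) (Fin d × Fin d) ℂ :=
  Matrix.of fun p q => if p.1 = q.2 ∧ p.2 = q.1 then 1 else 0

/-- The `d`-dimensional Werner state `ρ_W(α) = α (I - F)/(d(d-1)) + (1-α) I/d²`. -/
noncomputable def wernerState (d : ℕ) (α : ℝ) :
    Matrix (Fin d × Fin d) (Fin d × Fin d) ℂ :=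
  (α / ((d : ℝ) * ((d : ℝ) - 1))) • ((1 : Matrix (Fin d × Fin d) (Fin d × Fin d) ℂ) - swapMatrix d)
    + ((1 - α) / ((d : ℝ) ^ 2)) • (1 : Matrix (Fin d × Fin d) (Fin d × Fin d) ℂ)

variable {n : Type*} [Fintype n] [DecidableEq n]

lemma smul_psd {A : Matrix n n ℂ} {c : ℝ} (hc : 0 ≤ c) (hA : A.PosSemidef) :
    (c • A).PosSemidef := by
  refine posSemidef_iff_dotProduct_mulVec.mpr ⟨?_, ?_⟩
  · unfold Matrix.IsHermitian
    rw [conjTranspose_smul, star_trivial, hA.1]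
  · intro x
    rw [smul_mulVec, dotProduct_smul]
    have h := hA.dotProduct_mulVec_nonneg x
    have : (c : ℂ) * (star x ⬝ᵥ A *ᵥ x) = c • (star x ⬝ᵥ A *ᵥ x) := by
      simp [Complex.real_smul]
    calc (0:ℂ) ≤ (c:ℂ) * (star x ⬝ᵥ A *ᵥ x) :=
          mul_nonneg (by exact_mod_cast Complex.zero_le_real.mpr hc) h
      _ = c • (star x ⬝ᵥ A *ᵥ x) := this

lemma herm_sq_psd {A : Matrix n n ℂ} (hH : Aᴴ = A) (hsq : A * A = A + A) :
    A.PosSemidef := by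
  have h1 : (Aᴴ * A).PosSemidef := posSemidef_conjTranspose_mul_self A
  rw [hH, hsq] at h1
  have : A = (1/2 : ℝ) • (A + A) := by
    rw [smul_add]
    ext i j
    simp [Matrix.add_apply, Matrix.smul_apply, Complex.real_smul]
    ring
  rw [this]
  exact smul_psd (by norm_num) h1

-- swap matrix basic facts
lemma swap_herm (d : ℕ) : (swapMatrix d)ᴴ = swapMatrix d := by
  ext p q
  simp only [conjTranspose_apply, swapMatrix, of_apply, apply_ite (star : ℂ → ℂ), star_one,
    star_zero]
  congr 1
  simp only [eq_iff_iff]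
  constructor <;> rintro ⟨h1, h2⟩ <;> exact ⟨h2.symm, h1.symm⟩

lemma swap_cond {d : ℕ} (p q : Fin d × Fin d) :
    (p.1 = q.2 ∧ p.2 = q.1) ↔ q = (p.2, p.1) := by
  rw [Prod.ext_iff]
  constructor <;> rintro ⟨h1, h2⟩ <;> exact ⟨h2.symm, h1.symm⟩

lemma swap_apply {d : ℕ} (p q : Fin d × Fin d) :
    swapMatrix d p q = if q = (p.2, p.1) then 1 else 0 := by
  simp only [swapMatrix, of_apply, swap_cond]

lemma swap_sq (d : ℕ) : swapMatrix d * swapMatrix d = 1 := by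
  ext p q
  simp only [Matrix.mul_apply, swap_apply, Matrix.one_apply, ite_mul, one_mul, zero_mul,
    Finset.sum_ite_eq', Finset.mem_univ, if_true]
  by_cases h : q = ((p.2, p.1).2, (p.2, p.1).1)
  · simp [h]
  · have hne : ¬ p = q := by
      intro hh; apply h; rw [← hh]
    have hne' : ¬ q = p := fun hh => hne hh.symm
    simp [hne, hne']

lemma one_sub_swap_sq (d : ℕ) :
    (1 - swapMatrix d) * (1 - swapMatrix d) = (1 - swapMatrix d) + (1 - swapMatrix d) := by
  have h := swap_sq d
  noncomm_ring [h]

lemma one_sub_swap_psd (d : ℕ) : (1 - swapMatrix d).PosSemidef := by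
  apply herm_sq_psd _ (one_sub_swap_sq d)
  rw [conjTranspose_sub, conjTranspose_one, swap_herm]

-- the matrix used for robustness upper bound
def robM (d : ℕ) : Matrix (Fin d × Fin d) (Fin d × Fin d) ℂ :=
  Matrix.of fun p q => if p.1 ≠ p.2 ∧ (q = p ∨ q = (p.2, p.1)) then 1 else 0

lemma robM_apply {d : ℕ} (p q : Fin d × Fin d) :
    robM d p q = if p.1 = p.2 then 0 else
      ((if q = p then 1 else 0) + (if q = (p.2, p.1) then 1 else 0)) := by
  simp only [robM, of_apply]
  by_cases h : p.1 = p.2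
  · simp [h]
  · have hne : p ≠ (p.2, p.1) := fun hc => h (by rw [Prod.ext_iff] at hc; rw [hc.1, hc.2])
    by_cases h1 : q = p
    · simp [h, h1, hne, Ne.symm hne]
    · by_cases h2 : q = (p.2, p.1) <;> simp [h, h1, h2, hne, Ne.symm hne]

lemma robM_real {d : ℕ} (p q : Fin d × Fin d) : star (robM d p q) = robM d p q := by
  unfold robM
  simp only [of_apply]
  split <;> simp

lemma robM_symm {d : ℕ} (p q : Fin d × Fin d) : robM d q p = robM d p q := by
  unfold robM
  simp only [of_apply]
  congr 1
  simp only [eq_iff_iff]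
  constructor
  · rintro ⟨h1, (rfl | h2)⟩
    · exact ⟨h1, Or.inl rfl⟩
    · rw [Prod.ext_iff] at h2
      obtain ⟨ha, hb⟩ := h2
      simp only at ha hb
      refine ⟨by rw [ha, hb]; exact fun hc => h1 hc.symm, Or.inr ?_⟩
      rw [Prod.ext_iff]
      exact ⟨hb.symm, ha.symm⟩
  · rintro ⟨h1, (rfl | h2)⟩
    · exact ⟨h1, Or.inl rfl⟩
    · rw [Prod.ext_iff] at h2
      obtain ⟨ha, hb⟩ := h2
      simp only at ha hb
      refine ⟨by rw [ha, hb]; exact fun hc => h1 hc.symm, Or.inr ?_⟩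
      rw [Prod.ext_iff]
      exact ⟨hb.symm, ha.symm⟩

lemma robM_herm (d : ℕ) : (robM d)ᴴ = robM d := by
  ext p q
  rw [conjTranspose_apply, robM_real, robM_symm]

lemma robM_swap {d : ℕ} (p q : Fin d × Fin d) : robM d (p.2, p.1) q = robM d p q := by
  unfold robM
  simp only [of_apply, Prod.mk.eta]
  congr 1
  simp only [eq_iff_iff]
  constructor <;> rintro ⟨h1, h2⟩ <;> exact ⟨fun hc => h1 hc.symm, h2.symm⟩

lemma robM_sq (d : ℕ) : robM d * robM d = robM d + robM d := by
  ext p q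
  rw [Matrix.add_apply, Matrix.mul_apply]
  have hMC : ∀ r, robM d p r * robM d r q = (if p.1 = p.2 then 0 else
      ((if r = p then 1 else 0) + (if r = (p.2, p.1) then 1 else 0)) * robM d r q) := by
    intro r
    rw [robM_apply]
    by_cases h : p.1 = p.2 <;> simp [h]
  rw [Finset.sum_congr rfl fun r _ => hMC r]
  by_cases h : p.1 = p.2
  · simp [h, robM_apply]
  · simp only [h, if_false, add_mul, ite_mul, one_mul, zero_mul, Finset.sum_add_distrib,
      Finset.sum_ite_eq, Finset.sum_ite_eq', Finset.mem_univ, if_true]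
    rw [robM_swap]

lemma robM_psd (d : ℕ) : (robM d).PosSemidef :=
  herm_sq_psd (robM_herm d) (robM_sq d)

lemma diag_cond {d : ℕ} (p : Fin d × Fin d) : p = (p.2, p.1) ↔ p.1 = p.2 := by
  rw [Prod.ext_iff]
  constructor
  · rintro ⟨h1, _⟩; exact h1
  · intro h; exact ⟨h, h.symm⟩

lemma count_sumR {d : ℕ} (c : ℝ) :
    ∑ p : Fin d × Fin d, (if p.1 = p.2 then 0 else c) = ((d:ℝ) * (d:ℝ) - d) * c := by
  rw [Fintype.sum_prod_type]
  have hrow : ∀ i : Fin d, ∑ j : Fin d, (if i = j then (0:ℝ) else c) = (d:ℝ) * c - c := by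
    intro i
    have hpt : ∀ j : Fin d, (if i = j then (0:ℝ) else c) = c - (if i = j then c else 0) := by
      intro j; split <;> simp
    rw [Finset.sum_congr rfl fun j _ => hpt j, Finset.sum_sub_distrib, Finset.sum_const,
      Finset.sum_ite_eq, Finset.card_univ]
    simp [nsmul_eq_mul]
  rw [Finset.sum_congr rfl fun i _ => hrow i, Finset.sum_const, Finset.card_univ]
  simp [nsmul_eq_mul]
  ring

lemma count_sumC {d : ℕ} (c : ℂ) :
    ∑ p : Fin d × Fin d, (if p.1 = p.2 then 0 else c) = ((d:ℂ) * (d:ℂ) - d) * c := by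
  rw [Fintype.sum_prod_type]
  have hrow : ∀ i : Fin d, ∑ j : Fin d, (if i = j then (0:ℂ) else c) = (d:ℂ) * c - c := by
    intro i
    have hpt : ∀ j : Fin d, (if i = j then (0:ℂ) else c) = c - (if i = j then c else 0) := by
      intro j; split <;> simp
    rw [Finset.sum_congr rfl fun j _ => hpt j, Finset.sum_sub_distrib, Finset.sum_const,
      Finset.sum_ite_eq, Finset.card_univ]
    simp [nsmul_eq_mul]
  rw [Finset.sum_congr rfl fun i _ => hrow i, Finset.sum_const, Finset.card_univ]
  simp [nsmul_eq_mul]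
  ring

lemma trace_one_sub_swap (d : ℕ) : (1 - swapMatrix d).trace = (d:ℂ) * d - d := by
  rw [Matrix.trace]
  have hpt : ∀ p : Fin d × Fin d, (1 - swapMatrix d).diag p = (if p.1 = p.2 then 0 else 1) := by
    intro p
    simp only [Matrix.diag_apply, Matrix.sub_apply, Matrix.one_apply_eq, swap_apply, diag_cond]
    by_cases h : p.1 = p.2 <;> simp [h]
  rw [Finset.sum_congr rfl fun p _ => hpt p, count_sumC]
  ring

lemma trace_robM (d : ℕ) : (robM d).trace = (d:ℂ) * d - d := by
  rw [Matrix.trace]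
  have hpt : ∀ p : Fin d × Fin d, (robM d).diag p = (if p.1 = p.2 then 0 else 1) := by
    intro p
    rw [Matrix.diag_apply, robM_apply]
    by_cases h : p.1 = p.2
    · simp [h]
    · have : ¬ p = (p.2, p.1) := fun hc => h ((diag_cond p).mp hc)
      simp [h, this]
  rw [Finset.sum_congr rfl fun p _ => hpt p, count_sumC]
  ring

section Main
variable {d : ℕ} {α : ℝ}

lemma werner_offdiag (d : ℕ) (α : ℝ) {p q : Fin d × Fin d} (hpq : p ≠ q) :
    wernerState d α p q
      = if q = (p.2, p.1) then -((α / ((d:ℝ) * ((d:ℝ) - 1)) : ℝ) : ℂ) else 0 := by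
  have h1 : ¬ p = q := hpq
  simp only [wernerState, Matrix.add_apply, Matrix.smul_apply, Matrix.sub_apply,
    Matrix.one_apply, swap_apply, h1, if_false]
  by_cases h : q = (p.2, p.1)
  · simp [h, Complex.real_smul]
  · simp [h]

lemma werner_sum (hd : 2 ≤ d) (hα0 : 0 ≤ α) :
    ∑ p : Fin d × Fin d, (if p.1 = p.2 then 0 else ‖wernerState d α p (p.2, p.1)‖) = α := by
  have hdr : (2:ℝ) ≤ (d:ℝ) := by exact_mod_cast hd
  have hdd : (0:ℝ) < (d:ℝ) * ((d:ℝ) - 1) := by nlinarith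
  have hpt : ∀ p : Fin d × Fin d,
      (if p.1 = p.2 then (0:ℝ) else ‖wernerState d α p (p.2, p.1)‖)
      = (if p.1 = p.2 then 0 else α / ((d:ℝ) * ((d:ℝ) - 1))) := by
    intro p
    by_cases h : p.1 = p.2
    · simp [h]
    · have hne : p ≠ (p.2, p.1) := fun hc => h ((diag_cond p).mp hc)
      rw [werner_offdiag d α hne, if_pos rfl, if_neg h, norm_neg]
      rw [Complex.norm_real, Real.norm_eq_abs, abs_of_nonneg (div_nonneg hα0 hdd.le), if_neg h]
  rw [Finset.sum_congr rfl fun p _ => hpt p, count_sumR]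
  have hd1 : (d:ℝ) - 1 ≠ 0 := by linarith
  field_simp

lemma werner_cl1_row (hd : 2 ≤ d) (hα0 : 0 ≤ α) (p : Fin d × Fin d) :
    ∑ q : Fin d × Fin d, (if p = q then 0 else ‖wernerState d α p q‖)
      = (if p.1 = p.2 then 0 else ‖wernerState d α p (p.2, p.1)‖) := by
  have hpt : ∀ q : Fin d × Fin d, (if p = q then (0:ℝ) else ‖wernerState d α p q‖)
      = (if q = (p.2, p.1) then (if p.1 = p.2 then 0 else ‖wernerState d α p (p.2, p.1)‖)
         else 0) := by
    intro q
    by_cases hq : p = q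
    · subst hq
      by_cases h : p.1 = p.2
      · rw [if_pos rfl, if_pos ((diag_cond p).mpr h), if_pos h]
      · rw [if_pos rfl, if_neg (fun hc => h ((diag_cond p).mp hc))]
    · by_cases h2 : q = (p.2, p.1)
      · have hp : ¬ p.1 = p.2 := fun hc => hq (((diag_cond p).mpr hc).trans h2.symm)
        rw [if_neg hq, if_pos h2, if_neg hp, h2]
      · rw [werner_offdiag d α hq, if_neg h2, if_neg h2]
        simp
  rw [Finset.sum_congr rfl fun q _ => hpt q, Finset.sum_ite_eq']
  simp

lemma diag_re_nonneg {A : Matrix n n ℂ} (hA : A.PosSemidef) (i : n) : 0 ≤ (A i i).re := by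
  have h := hA.dotProduct_mulVec_nonneg (Pi.single i 1)
  have he : star (Pi.single i 1) ⬝ᵥ A *ᵥ (Pi.single i 1 : n → ℂ) = A i i := by
    simp [dotProduct, mulVec, Pi.single_apply, Finset.sum_ite_eq, apply_ite]
  rw [he] at h
  exact (Complex.le_def.mp h).1

lemma offdiag_bound {A : Matrix n n ℂ} (hA : A.PosSemidef) {p q : n} (hpq : p ≠ q) :
    ‖A p q‖ ≤ ((A p p).re + (A q q).re) / 2 := by
  by_cases hz : A p q = 0
  · have h1 := diag_re_nonneg hA p; have h2 := diag_re_nonneg hA q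
    simp [hz]; linarith
  · set z := A p q with hzdef
    set r : ℝ := ‖z‖ with hr
    have hr0 : r ≠ 0 := norm_ne_zero_iff.mpr hz
    have hrc : (r:ℂ) ≠ 0 := by exact_mod_cast hr0
    set c : ℂ := -(starRingEnd ℂ z) / r with hc
    have hqp : A q p = (starRingEnd ℂ) z := by
      have := congrFun (congrFun hA.1 q) p
      simpa [conjTranspose_apply] using this.symm
    have h := hA.dotProduct_mulVec_nonneg (fun j => (if j = p then (1:ℂ) else 0) + (if j = q then c else 0))
    have hexp : star (fun j => (if j = p then (1:ℂ) else 0) + (if j = q then c else 0)) ⬝ᵥ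
        A *ᵥ (fun j => (if j = p then (1:ℂ) else 0) + (if j = q then c else 0)) =
        A p p + (starRingEnd ℂ) c * c * A q q + c * z + (starRingEnd ℂ) c * A q p := by
      simp only [dotProduct, mulVec, Pi.star_apply, star_add, apply_ite (star : ℂ → ℂ), star_one,
        star_zero, mul_add, add_mul, Finset.sum_add_distrib, mul_ite, ite_mul, mul_zero, zero_mul,
        mul_one, one_mul, Finset.sum_ite_eq, Finset.sum_ite_eq', Finset.mem_univ, if_true,
        hpq, hpq.symm, if_false, hzdef]
      push_cast [Complex.star_def]
      ring
    have hzz : (starRingEnd ℂ) z * z = ((r^2 : ℝ) : ℂ) := by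
      rw [mul_comm, Complex.mul_conj, hr, Complex.normSq_eq_norm_sq]
    have hcz : c * z = -(r : ℂ) := by
      rw [hc, div_mul_eq_mul_div, neg_mul, hzz, neg_div]
      congr 1
      rw [eq_comm, eq_div_iff hrc]
      push_cast; ring
    have hcc : (starRingEnd ℂ) c * c = 1 := by
      rw [hc, map_div₀, map_neg, Complex.conj_conj, Complex.conj_ofReal, div_mul_div_comm,
        neg_mul_neg, mul_comm z, hzz]
      rw [div_eq_one_iff_eq (by push_cast; exact mul_ne_zero hrc hrc)]
      push_cast; ring
    have h4 : (starRingEnd ℂ) c * A q p = -(r:ℂ) := by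
      rw [hqp, ← _root_.map_mul, hcz]
      simp [Complex.conj_ofReal]
    rw [hexp, hcc, one_mul, hcz, h4] at h
    have hre := (Complex.le_def.mp h).1
    simp only [Complex.add_re, Complex.neg_re, Complex.ofReal_re, Complex.zero_re] at hre
    linarith

lemma sum_offdiag_le_one {d : ℕ} {τ : Matrix (Fin d × Fin d) (Fin d × Fin d) ℂ}
    (hτ : IsDensity τ) :
    ∑ p : Fin d × Fin d, (if p.1 = p.2 then 0 else ‖τ p (p.2, p.1)‖) ≤ 1 := by
  have hstep : ∑ p : Fin d × Fin d, (if p.1 = p.2 then 0 else ‖τ p (p.2, p.1)‖)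
      ≤ ∑ p : Fin d × Fin d,
        (if p.1 = p.2 then 0 else ((τ p p).re + (τ (p.2, p.1) (p.2, p.1)).re) / 2) := by
    apply Finset.sum_le_sum
    intro p _
    by_cases h : p.1 = p.2
    · simp [h]
    · simp only [h, if_false]
      exact offdiag_bound hτ.1 (by
        intro hcontra
        exact h (by rw [Prod.ext_iff] at hcontra; rw [hcontra.1, hcontra.2]))
  have hswap : ∑ p : Fin d × Fin d, (if p.1 = p.2 then 0 else (τ (p.2, p.1) (p.2, p.1)).re)
      = ∑ p : Fin d × Fin d, (if p.1 = p.2 then 0 else (τ p p).re) := by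
    apply Fintype.sum_equiv (Equiv.prodComm (Fin d) (Fin d))
    intro p
    rcases p with ⟨i, j⟩
    by_cases h : i = j <;> simp [Equiv.prodComm, h, eq_comm]
  have htr : ∑ p : Fin d × Fin d, (τ p p).re = 1 := by
    have := hτ.2
    have h2 : (τ.trace).re = 1 := by rw [this]; simp
    rw [Matrix.trace] at h2
    simpa [Matrix.diag, Complex.re_sum] using h2
  have hle : ∑ p : Fin d × Fin d, (if p.1 = p.2 then 0 else (τ p p).re)
      ≤ ∑ p : Fin d × Fin d, (τ p p).re := by
    apply Finset.sum_le_sum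
    intro p _
    by_cases h : p.1 = p.2 <;> simp [h, diag_re_nonneg hτ.1 p]
  calc ∑ p : Fin d × Fin d, (if p.1 = p.2 then 0 else ‖τ p (p.2, p.1)‖)
      ≤ ∑ p : Fin d × Fin d,
        (if p.1 = p.2 then 0 else ((τ p p).re + (τ (p.2, p.1) (p.2, p.1)).re) / 2) := hstep
    _ = ∑ p : Fin d × Fin d, (if p.1 = p.2 then 0 else (τ p p).re) := by
        have hpt : ∀ p : Fin d × Fin d,
            (if p.1 = p.2 then (0:ℝ) else ((τ p p).re + (τ (p.2, p.1) (p.2, p.1)).re) / 2)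
            = ((if p.1 = p.2 then 0 else (τ p p).re)
              + (if p.1 = p.2 then 0 else (τ (p.2, p.1) (p.2, p.1)).re)) / 2 := by
          intro p; by_cases h : p.1 = p.2 <;> simp [h]
        rw [Finset.sum_congr rfl (fun p _ => hpt p), ← Finset.sum_div,
          Finset.sum_add_distrib, hswap]
        ring
    _ ≤ 1 := htr ▸ hle

lemma hd_facts (hd : 2 ≤ d) : (d:ℝ) ≠ 0 ∧ (0:ℝ) < (d:ℝ) * ((d:ℝ) - 1) := by
  have h2 : (2:ℝ) ≤ (d:ℝ) := by exact_mod_cast hd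
  constructor
  · linarith
  · nlinarith

lemma hdC (hd : 2 ≤ d) : (d:ℂ) ≠ 0 ∧ ((d:ℂ) - 1) ≠ 0 := by
  constructor
  · exact_mod_cast Nat.cast_ne_zero.mpr (by omega)
  · intro hc
    have : (d:ℂ) = 1 := by linear_combination hc
    have : d = 1 := by exact_mod_cast this
    omega

lemma density_sigma (hd : 2 ≤ d) :
    IsDensity (((1:ℝ)/(d:ℝ)^2) • (1 : Matrix (Fin d × Fin d) (Fin d × Fin d) ℂ)) := by
  refine ⟨smul_psd (by positivity) Matrix.PosSemidef.one, ?_⟩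
  rw [Matrix.trace_smul, Matrix.trace_one, Complex.real_smul]
  have hcard : (Fintype.card (Fin d × Fin d) : ℂ) = (d:ℂ) * d := by
    simp [Fintype.card_prod]
  rw [hcard]
  have h1 := (hdC hd).1
  push_cast
  field_simp

lemma density_tau1 (hd : 2 ≤ d) :
    IsDensity (((1:ℝ)/((d:ℝ) * ((d:ℝ) - 1))) • (1 - swapMatrix d)) := by
  obtain ⟨hd0, hdd⟩ := hd_facts hd
  refine ⟨smul_psd (by positivity) (one_sub_swap_psd d), ?_⟩
  rw [Matrix.trace_smul, trace_one_sub_swap, Complex.real_smul]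
  obtain ⟨h1, h2⟩ := hdC hd
  push_cast
  field_simp

lemma density_tau2 (hd : 2 ≤ d) :
    IsDensity (((1:ℝ)/((d:ℝ) * ((d:ℝ) - 1))) • robM d) := by
  obtain ⟨hd0, hdd⟩ := hd_facts hd
  refine ⟨smul_psd (by positivity) (robM_psd d), ?_⟩
  rw [Matrix.trace_smul, trace_robM, Complex.real_smul]
  obtain ⟨h1, h2⟩ := hdC hd
  push_cast
  field_simp

lemma werner_decomp (d : ℕ) (α : ℝ) :
    wernerState d α
      = (1 - α) • (((1:ℝ)/(d:ℝ)^2) • (1 : Matrix (Fin d × Fin d) (Fin d × Fin d) ℂ))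
        + α • (((1:ℝ)/((d:ℝ) * ((d:ℝ) - 1))) • (1 - swapMatrix d)) := by
  unfold wernerState
  rw [smul_smul, smul_smul, add_comm]
  congr 1
  · congr 1; ring
  · congr 1; ring

lemma sigma_incoherent (hd : 2 ≤ d) :
    IsIncoherent (((1:ℝ)/(d:ℝ)^2) • (1 : Matrix (Fin d × Fin d) (Fin d × Fin d) ℂ)) := by
  intro p q hpq
  simp [Matrix.smul_apply, Matrix.one_apply, hpq]

lemma rob_witness (hd : 2 ≤ d) (hα : α ∈ Set.Icc (0:ℝ) 1) :
    IsIncoherent ((1 + α)⁻¹ • (wernerState d α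
      + α • (((1:ℝ)/((d:ℝ) * ((d:ℝ) - 1))) • robM d))) := by
  obtain ⟨hd0, hdd⟩ := hd_facts hd
  intro p q hpq
  simp only [Matrix.smul_apply, Matrix.add_apply]
  have hinner : wernerState d α p q
      + α • ((1:ℝ)/((d:ℝ) * ((d:ℝ) - 1))) • robM d p q = 0 := by
    rw [werner_offdiag d α hpq, robM_apply]
    by_cases h2 : q = (p.2, p.1)
    · have hp : ¬ p.1 = p.2 := fun hc => hpq (((diag_cond p).mpr hc).trans h2.symm)
      have hqp : ¬ q = p := fun hc => hpq hc.symm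
      rw [if_pos h2, if_neg hp, if_neg hqp, if_pos h2]
      rw [Complex.real_smul, Complex.real_smul]
      push_cast
      field_simp
      simp
    · by_cases h1 : p.1 = p.2
      · have hqp : ¬ q = p := fun hc => hpq hc.symm
        rw [if_neg h2, if_pos h1]
        simp
      · have hqp : ¬ q = p := fun hc => hpq hc.symm
        rw [if_neg h2, if_neg h1, if_neg hqp, if_neg h2]
        simp
  rw [hinner, smul_zero]

lemma lb_core (hd : 2 ≤ d) (hα0 : 0 ≤ α) {s : ℝ} (hs0 : 0 ≤ s)
    {τ : Matrix (Fin d × Fin d) (Fin d × Fin d) ℂ} (hτ : IsDensity τ)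
    (hkey : ∀ p q : Fin d × Fin d, p ≠ q → ‖wernerState d α p q‖ = s * ‖τ p q‖) :
    α ≤ s := by
  have h1 := (werner_sum hd hα0).symm
  have h2 : ∑ p : Fin d × Fin d, (if p.1 = p.2 then 0 else ‖wernerState d α p (p.2, p.1)‖)
      = s * ∑ p : Fin d × Fin d, (if p.1 = p.2 then 0 else ‖τ p (p.2, p.1)‖) := by
    rw [Finset.mul_sum]
    apply Finset.sum_congr rfl
    intro p _
    by_cases h : p.1 = p.2
    · simp [h]
    · have hne : p ≠ (p.2, p.1) := fun hc => h ((diag_cond p).mp hc)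
      simp [h, hkey p (p.2, p.1) hne]
  have h3 := sum_offdiag_le_one hτ
  have h4 : α = s * ∑ p : Fin d × Fin d, (if p.1 = p.2 then 0 else ‖τ p (p.2, p.1)‖) := by
    rw [h1, h2]
  calc α = s * ∑ p : Fin d × Fin d, (if p.1 = p.2 then 0 else ‖τ p (p.2, p.1)‖) := h4
    _ ≤ s * 1 := mul_le_mul_of_nonneg_left h3 hs0
    _ = s := mul_one s

theorem werner_cohWeight_eq_robustness_eq_l1 {d : ℕ} (hd : 2 ≤ d)
    (α : ℝ) (hα : α ∈ Set.Icc (0 : ℝ) 1) :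
    cohWeight (wernerState d α) = α ∧
    cohRobustness (wernerState d α) = α ∧
    Cl1 (wernerState d α) = α := by
  obtain ⟨hα0, hα1⟩ := hα
  have hcl1 : Cl1 (wernerState d α) = α := by
    unfold Cl1
    rw [Finset.sum_congr rfl fun p _ => werner_cl1_row hd hα0 p]
    exact werner_sum hd hα0
  have hWset : ∀ s ∈ {s : ℝ | s ∈ Set.Icc (0:ℝ) 1 ∧
      ∃ σ τ : Matrix (Fin d × Fin d) (Fin d × Fin d) ℂ,
        IsDensity σ ∧ IsIncoherent σ ∧ IsDensity τ ∧
        wernerState d α = (1 - s) • σ + s • τ}, α ≤ s := by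
    rintro s ⟨⟨hs0, _⟩, σ, τ, _, hσi, hτd, heq⟩
    apply lb_core hd hα0 hs0 hτd
    intro p q hpq
    have he : wernerState d α p q = (1 - s) • σ p q + s • τ p q := by
      rw [heq]; simp [Matrix.add_apply, Matrix.smul_apply]
    rw [hσi p q hpq, smul_zero, zero_add] at he
    rw [he, norm_smul, Real.norm_eq_abs, abs_of_nonneg hs0]
  have hWmem : α ∈ {s : ℝ | s ∈ Set.Icc (0:ℝ) 1 ∧
      ∃ σ τ : Matrix (Fin d × Fin d) (Fin d × Fin d) ℂ,
        IsDensity σ ∧ IsIncoherent σ ∧ IsDensity τ ∧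
        wernerState d α = (1 - s) • σ + s • τ} :=
    ⟨⟨hα0, hα1⟩, _, _, density_sigma hd, sigma_incoherent hd, density_tau1 hd,
      werner_decomp d α⟩
  have hweight : cohWeight (wernerState d α) = α := by
    unfold cohWeight
    exact le_antisymm (csInf_le ⟨0, fun x hx => hx.1.1⟩ hWmem)
      (le_csInf ⟨α, hWmem⟩ hWset)
  have hRset : ∀ s ∈ {s : ℝ | 0 ≤ s ∧
      ∃ τ : Matrix (Fin d × Fin d) (Fin d × Fin d) ℂ, IsDensity τ ∧
        IsIncoherent ((1 + s)⁻¹ • (wernerState d α + s • τ))}, α ≤ s := by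
    rintro s ⟨hs0, τ, hτd, hinc⟩
    apply lb_core hd hα0 hs0 hτd
    intro p q hpq
    have h0 := hinc p q hpq
    simp only [Matrix.smul_apply, Matrix.add_apply] at h0
    rcases smul_eq_zero.mp h0 with h | h
    · exact absurd h (inv_ne_zero (by linarith))
    · have he : wernerState d α p q = -(s • τ p q) :=
        eq_neg_of_add_eq_zero_left h
      rw [he, norm_neg, norm_smul, Real.norm_eq_abs, abs_of_nonneg hs0]
  have hRmem : α ∈ {s : ℝ | 0 ≤ s ∧
      ∃ τ : Matrix (Fin d × Fin d) (Fin d × Fin d) ℂ, IsDensity τ ∧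
        IsIncoherent ((1 + s)⁻¹ • (wernerState d α + s • τ))} :=
    ⟨hα0, _, density_tau2 hd, rob_witness hd ⟨hα0, hα1⟩⟩
  have hrob : cohRobustness (wernerState d α) = α := by
    unfold cohRobustness
    exact le_antisymm (csInf_le ⟨0, fun x hx => hx.1⟩ hRmem)
      (le_csInf ⟨α, hRmem⟩ hRset)
  exact ⟨hweight, hrob, hcl1⟩

end Main

end
end

section
/- Every coherent pure state has coherence weight 1: if ψ ∈ ℂ^d is a unit vector and the rank-one density matrix ρ = |ψ⟩⟨ψ| is not diagonal in the standard basis, then C_w(ρ) = 1. -/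
open Matrix BigOperators
open scoped ComplexOrder

noncomputable section

lemma quadform_vecMulVec {d : ℕ} (ψ v : Fin d → ℂ) :
    star v ⬝ᵥ (Matrix.vecMulVec ψ (star ψ)) *ᵥ v
      = (star v ⬝ᵥ ψ) * (star ψ ⬝ᵥ v) := by
  simp only [dotProduct, Matrix.mulVec, Matrix.vecMulVec_apply, Finset.sum_mul,
    Finset.mul_sum, Pi.star_apply]
  rw [Finset.sum_comm]
  exact Finset.sum_congr rfl fun a _ => Finset.sum_congr rfl fun b _ => by ring

lemma starv_dot {d : ℕ} (ψ v : Fin d → ℂ) : star v ⬝ᵥ ψ = star (star ψ ⬝ᵥ v) := by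
  simp [dotProduct, Finset.sum_comm, mul_comm]

lemma vecMulVec_posSemidef {d : ℕ} (ψ : Fin d → ℂ) :
    (Matrix.vecMulVec ψ (star ψ)).PosSemidef := by
  apply Matrix.PosSemidef.of_dotProduct_mulVec_nonneg
  · ext i j
    simp [Matrix.conjTranspose_apply, Matrix.vecMulVec_apply, mul_comm]
  · intro v
    rw [quadform_vecMulVec, starv_dot]
    exact star_mul_self_nonneg _

lemma mul_star_self_eq (z : ℂ) : z * star z = ((‖z‖ ^ 2 : ℝ) : ℂ) := by
  rw [show star z = (starRingEnd ℂ) z from rfl, Complex.mul_conj]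
  norm_cast
  exact Complex.normSq_eq_norm_sq z

lemma quad_two {d : ℕ} (σ : Matrix (Fin d) (Fin d) ℂ) (k m : Fin d) (hkm : k ≠ m) (a b : ℂ)
    (h1 : σ k m = 0) (h2 : σ m k = 0) :
    star (Pi.single k a - Pi.single m b) ⬝ᵥ σ *ᵥ (Pi.single k a - Pi.single m b)
      = star a * σ k k * a + star b * σ m m * b := by
  have hs : star (Pi.single k a - Pi.single m b)
      = (Pi.single k (star a) : Fin d → ℂ) - Pi.single m (star b) := by
    ext x
    by_cases hx : x = k <;> by_cases hx2 : x = m <;>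
      simp_all [Pi.single_apply]
  rw [hs]
  simp [sub_dotProduct, single_dotProduct, Matrix.mulVec_sub, Matrix.mulVec_single,
    Pi.sub_apply, h1, h2]
  ring

lemma vecMulVec_trace {d : ℕ} (ψ : Fin d → ℂ) :
    (Matrix.vecMulVec ψ (star ψ)).trace = ↑(∑ i, ‖ψ i‖ ^ 2) := by
  simp only [Matrix.trace, Matrix.diag_apply, Matrix.vecMulVec_apply, Pi.star_apply,
    mul_star_self_eq]
  norm_cast

theorem cohWeight_pure_coherent_eq_one {d : ℕ}
    (ψ : Fin d → ℂ) (hψ : ∑ i, ‖ψ i‖ ^ 2 = 1)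
    (hcoh : ¬ IsIncoherent (Matrix.vecMulVec ψ (star ψ))) :
    cohWeight (Matrix.vecMulVec ψ (star ψ)) = 1 := by
  set ρ := Matrix.vecMulVec ψ (star ψ) with hρdef
  -- pick an offdiagonal nonzero entry
  simp only [IsIncoherent, not_forall] at hcoh
  obtain ⟨i, j, hij, hent⟩ := hcoh
  have hρij : ψ i * star (ψ j) ≠ 0 := by simpa [hρdef, Matrix.vecMulVec_apply] using hent
  have hψi : ψ i ≠ 0 := fun h => hρij (by simp [h])
  have hψj : ψ j ≠ 0 := fun h => hρij (by simp [h])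
  have hρdens : IsDensity ρ := ⟨vecMulVec_posSemidef ψ, by rw [hρdef, vecMulVec_trace, hψ]; norm_num⟩
  have hset : {s : ℝ | s ∈ Set.Icc (0 : ℝ) 1 ∧
      ∃ σ τ : Matrix (Fin d) (Fin d) ℂ,
        IsDensity σ ∧ IsIncoherent σ ∧ IsDensity τ ∧
        ρ = (1 - s) • σ + s • τ} = {1} := by
    apply Set.eq_singleton_iff_unique_mem.mpr
    constructor
    · refine ⟨by norm_num, Matrix.diagonal (fun k => (‖ψ k‖ ^ 2 : ℂ)), ρ, ⟨?_, ?_⟩, ?_, hρdens, by simp⟩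
      · exact Matrix.posSemidef_diagonal_iff.mpr fun k => by positivity
      · rw [Matrix.trace_diagonal]; exact_mod_cast hψ
      · exact fun a b hab => Matrix.diagonal_apply_ne _ hab
    · rintro s ⟨⟨hs0, hs1⟩, σ, τ, hσ, hσI, hτ, heq⟩
      by_contra hne
      have hlt : s < 1 := lt_of_le_of_ne hs1 hne
      exfalso
      -- show every diagonal entry of σ vanishes
      have hdiag : ∀ k, σ k k = 0 := by
        intro k
        set m : Fin d := if k = i then j else i with hm
        have hmk : m ≠ k := by
          rcases eq_or_ne k i with h | h
          · simp [hm, h]; exact fun hh => hij (h ▸ hh.symm) |>.elim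
          · simp [hm, h]; exact fun hh => h hh.symm
        have hψm : ψ m ≠ 0 := by rcases eq_or_ne k i with h | h <;> simp [hm, h, hψi, hψj]
        set v : Fin d → ℂ := Pi.single k (star (ψ m)) - Pi.single m (star (ψ k)) with hv
        have horth : star ψ ⬝ᵥ v = 0 := by
          simp [hv, dotProduct_sub, dotProduct_single, mul_comm]
        have hqρ : star v ⬝ᵥ ρ *ᵥ v = 0 := by
          rw [hρdef, quadform_vecMulVec, horth, mul_zero]
        -- decompose
        have hqsum : (↑(1 - s) : ℂ) * (star v ⬝ᵥ σ *ᵥ v) + (↑s : ℂ) * (star v ⬝ᵥ τ *ᵥ v) = 0 := by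
          rw [← hqρ, heq]
          simp [Matrix.add_mulVec, Matrix.smul_mulVec, dotProduct_add, dotProduct_smul,
            Complex.real_smul]
        have hqσ0 : star v ⬝ᵥ σ *ᵥ v = 0 := by
          have h1 : (0 : ℂ) ≤ (↑(1 - s) : ℂ) * (star v ⬝ᵥ σ *ᵥ v) :=
            mul_nonneg (by rw [Complex.zero_le_real]; linarith) (hσ.1.dotProduct_mulVec_nonneg v)
          have h2 : (0 : ℂ) ≤ (↑s : ℂ) * (star v ⬝ᵥ τ *ᵥ v) :=
            mul_nonneg (by rw [Complex.zero_le_real]; linarith) (hτ.1.dotProduct_mulVec_nonneg v)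
          have := (add_eq_zero_iff_of_nonneg h1 h2).mp hqsum
          have hc : (↑(1 - s) : ℂ) ≠ 0 := by
            simp only [ne_eq, Complex.ofReal_eq_zero]; linarith
          exact (mul_eq_zero.mp this.1).resolve_left hc
        -- compute the quadratic form of σ on v
        have hσkm : σ k m = 0 := hσI k m (Ne.symm hmk)
        have hσmk : σ m k = 0 := hσI m k hmk
        have hqσ : star v ⬝ᵥ σ *ᵥ v
            = (↑(‖ψ m‖ ^ 2) : ℂ) * σ k k + (↑(‖ψ k‖ ^ 2) : ℂ) * σ m m := by
          rw [hv, quad_two σ k m (Ne.symm hmk) _ _ hσkm hσmk, star_star, star_star,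
            show (ψ m : ℂ) * σ k k * star (ψ m) = (ψ m * star (ψ m)) * σ k k by ring,
            show (ψ k : ℂ) * σ m m * star (ψ k) = (ψ k * star (ψ k)) * σ m m by ring,
            mul_star_self_eq, mul_star_self_eq]
        have hkk0 : σ k k = 0 := by
          have hstar1 : ∀ p : Fin d, star (Pi.single p 1 : Fin d → ℂ) = (Pi.single p 1 : Fin d → ℂ) := by
            intro p; ext x; simp [Pi.single_apply, apply_ite (star : ℂ → ℂ)]
          have h1 : (0 : ℂ) ≤ (↑(‖ψ m‖ ^ 2) : ℂ) * σ k k := by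
            refine mul_nonneg (by rw [Complex.zero_le_real]; positivity) ?_
            have := hσ.1.dotProduct_mulVec_nonneg (Pi.single k 1)
            simpa [hstar1, Matrix.mulVec_single, single_dotProduct] using this
          have h2 : (0 : ℂ) ≤ (↑(‖ψ k‖ ^ 2) : ℂ) * σ m m := by
            refine mul_nonneg (by rw [Complex.zero_le_real]; positivity) ?_
            have := hσ.1.dotProduct_mulVec_nonneg (Pi.single m 1)
            simpa [hstar1, Matrix.mulVec_single, single_dotProduct] using this
          have := (add_eq_zero_iff_of_nonneg h1 h2).mp (hqσ ▸ hqσ0)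
          have hc : (↑(‖ψ m‖ ^ 2) : ℂ) ≠ 0 := by
            simp only [ne_eq, Complex.ofReal_eq_zero]
            exact pow_ne_zero 2 (norm_ne_zero_iff.mpr hψm)
          exact (mul_eq_zero.mp this.1).resolve_left hc
        exact hkk0
      have : σ.trace = 0 := by
        simp [Matrix.trace, Matrix.diag_apply, hdiag]
      rw [hσ.2] at this
      exact one_ne_zero this
  rw [cohWeight, hset]
  exact csInf_singleton 1
end
end

section
/- For all density matrices ρ₁ on ℂ^{d₁} and ρ₂ on ℂ^{d₂}, the coherence weight of their Kronecker (tensor) product satisfies C_w(ρ₁ ⊗ ρ₂) ≤ C_w(ρ₁) + C_w(ρ₂) − C_w(ρ₁)·C_w(ρ₂), where coherence on the tensor product is measured with respect to the product standard basis. -/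
open Matrix BigOperators
open scoped ComplexOrder

noncomputable section

open Kronecker

-- helpers
lemma kron_conjT {m n : Type*} (A : Matrix m m ℂ) (B : Matrix n n ℂ) :
    (A ⊗ₖ B)ᴴ = Aᴴ ⊗ₖ Bᴴ := by
  ext ⟨i, j⟩ ⟨k, l⟩
  simp [conjTranspose_apply, mul_comm]

lemma psd_kron {m n : Type*} [Fintype m] [Fintype n] [DecidableEq m] [DecidableEq n]
    {A : Matrix m m ℂ} {B : Matrix n n ℂ}
    (hA : A.PosSemidef) (hB : B.PosSemidef) : (A ⊗ₖ B).PosSemidef := by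
  exact hA.kronecker hB

lemma real_smul_mat {n : Type*} (r : ℝ) (M : Matrix n n ℂ) :
    r • M = (r : ℂ) • M := by
  ext i j
  simp [Complex.real_smul]

lemma psd_smul {n : Type*} [Fintype n] {M : Matrix n n ℂ} (h : M.PosSemidef)
    {r : ℝ} (hr : 0 ≤ r) : (r • M).PosSemidef := by
  rw [real_smul_mat]
  rw [Matrix.posSemidef_iff_dotProduct_mulVec]
  constructor
  · have := h.1
    unfold Matrix.IsHermitian at *
    rw [Matrix.conjTranspose_smul, this]
    norm_num
  · intro x
    rw [Matrix.smul_mulVec, dotProduct_smul]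
    have h0 : (0:ℂ) ≤ (r : ℂ) := by
      rw [Complex.le_def]; simp [hr]
    exact mul_nonneg h0 ((Matrix.posSemidef_iff_dotProduct_mulVec.mp h).2 x)

example : True := trivial

lemma mem_tensor {d₁ d₂ : ℕ} {ρ₁ : Matrix (Fin d₁) (Fin d₁) ℂ}
    {ρ₂ : Matrix (Fin d₂) (Fin d₂) ℂ} {s₁ s₂ : ℝ}
    (h₁ : s₁ ∈ {s : ℝ | s ∈ Set.Icc (0 : ℝ) 1 ∧
      ∃ σ τ : Matrix (Fin d₁) (Fin d₁) ℂ,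
        IsDensity σ ∧ IsIncoherent σ ∧ IsDensity τ ∧ ρ₁ = (1 - s) • σ + s • τ})
    (h₂ : s₂ ∈ {s : ℝ | s ∈ Set.Icc (0 : ℝ) 1 ∧
      ∃ σ τ : Matrix (Fin d₂) (Fin d₂) ℂ,
        IsDensity σ ∧ IsIncoherent σ ∧ IsDensity τ ∧ ρ₂ = (1 - s) • σ + s • τ}) :
    (s₁ + s₂ - s₁ * s₂) ∈ {s : ℝ | s ∈ Set.Icc (0 : ℝ) 1 ∧
      ∃ σ τ : Matrix (Fin d₁ × Fin d₂) (Fin d₁ × Fin d₂) ℂ,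
        IsDensity σ ∧ IsIncoherent σ ∧ IsDensity τ ∧
        ρ₁ ⊗ₖ ρ₂ = (1 - (s₁ + s₂ - s₁ * s₂)) • σ + (s₁ + s₂ - s₁ * s₂) • τ} := by
  obtain ⟨⟨hs₁0, hs₁1⟩, σ₁, τ₁, hσ₁, hσ₁i, hτ₁, heq₁⟩ := h₁
  obtain ⟨⟨hs₂0, hs₂1⟩, σ₂, τ₂, hσ₂, hσ₂i, hτ₂, heq₂⟩ := h₂
  set s : ℝ := s₁ + s₂ - s₁ * s₂ with hs_def
  have hs0 : 0 ≤ s := by nlinarith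
  have hs1 : s ≤ 1 := by nlinarith
  have hσσ : IsDensity (σ₁ ⊗ₖ σ₂) :=
    ⟨psd_kron hσ₁.1 hσ₂.1, by rw [Matrix.trace_kronecker, hσ₁.2, hσ₂.2, one_mul]⟩
  have hσσi : IsIncoherent (σ₁ ⊗ₖ σ₂) := by
    rintro ⟨i₁, i₂⟩ ⟨j₁, j₂⟩ hij
    rcases ne_or_eq i₁ j₁ with h | h
    · simp [Matrix.kroneckerMap_apply, hσ₁i i₁ j₁ h]
    · have h2 : i₂ ≠ j₂ := by
        intro h2; exact hij (by simp [h, h2])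
      simp [Matrix.kroneckerMap_apply, hσ₂i i₂ j₂ h2]
  refine ⟨⟨hs0, hs1⟩, σ₁ ⊗ₖ σ₂, ?_⟩
  by_cases hs : s = 0
  · have hs₁ : s₁ = 0 := by nlinarith
    have hs₂ : s₂ = 0 := by nlinarith
    refine ⟨σ₁ ⊗ₖ σ₂, hσσ, hσσi, hσσ, ?_⟩
    rw [heq₁, heq₂, hs₁, hs₂, hs]
    simp
  · refine ⟨s⁻¹ • (((1 - s₁) * s₂) • (σ₁ ⊗ₖ τ₂) + (s₁ * (1 - s₂)) • (τ₁ ⊗ₖ σ₂)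
      + (s₁ * s₂) • (τ₁ ⊗ₖ τ₂)), hσσ, hσσi, ⟨?_, ?_⟩, ?_⟩
    · have h1 : (0:ℝ) ≤ (1 - s₁) * s₂ := by nlinarith
      have h2 : (0:ℝ) ≤ s₁ * (1 - s₂) := by nlinarith
      have h3 : (0:ℝ) ≤ s₁ * s₂ := by nlinarith
      exact psd_smul (((psd_smul (psd_kron hσ₁.1 hτ₂.1) h1).add
        (psd_smul (psd_kron hτ₁.1 hσ₂.1) h2)).add
        (psd_smul (psd_kron hτ₁.1 hτ₂.1) h3)) (inv_nonneg.mpr hs0)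
    · rw [Matrix.trace_smul, Matrix.trace_add, Matrix.trace_add,
        Matrix.trace_smul, Matrix.trace_smul, Matrix.trace_smul,
        Matrix.trace_kronecker, Matrix.trace_kronecker, Matrix.trace_kronecker,
        hσ₁.2, hσ₂.2, hτ₁.2, hτ₂.2]
      simp only [one_mul, Complex.real_smul]
      push_cast
      field_simp
      rw [hs_def]
      push_cast
      ring
    · rw [heq₁, heq₂]
      simp only [Matrix.add_kronecker, Matrix.kronecker_add,
        Matrix.smul_kronecker, Matrix.kronecker_smul]
      match_scalars <;> field_simp <;> ring

lemma set_nonempty {d : ℕ} {ρ : Matrix (Fin d) (Fin d) ℂ} (hρ : IsDensity ρ) :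
    (1:ℝ) ∈ {s : ℝ | s ∈ Set.Icc (0 : ℝ) 1 ∧
      ∃ σ τ : Matrix (Fin d) (Fin d) ℂ,
        IsDensity σ ∧ IsIncoherent σ ∧ IsDensity τ ∧ ρ = (1 - s) • σ + s • τ} := by
  have hd : d ≠ 0 := by
    rintro rfl
    have := hρ.2
    simp [Matrix.trace] at this
  refine ⟨⟨zero_le_one, le_rfl⟩, ((d:ℂ)⁻¹ • 1 : Matrix (Fin d) (Fin d) ℂ), ρ, ⟨?_, ?_⟩, ?_, hρ, by simp⟩
  · have h1 : ((1 : Matrix (Fin d) (Fin d) ℂ)).PosSemidef := Matrix.PosSemidef.one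
    have : ((d:ℂ)⁻¹ • 1 : Matrix (Fin d) (Fin d) ℂ) = ((d:ℝ)⁻¹ • 1 : Matrix (Fin d) (Fin d) ℂ) := by
      rw [real_smul_mat]; push_cast; ring_nf
    rw [this]
    exact psd_smul h1 (by positivity)
  · rw [Matrix.trace_smul, Matrix.trace_one]
    simp [Finset.card_univ]
    rw [inv_mul_cancel₀]
    exact_mod_cast hd
  · intro i j hij
    simp [Matrix.one_apply, hij]

theorem cohWeight_tensor_subadditive {d₁ d₂ : ℕ}
    (ρ₁ : Matrix (Fin d₁) (Fin d₁) ℂ) (hρ₁ : IsDensity ρ₁)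
    (ρ₂ : Matrix (Fin d₂) (Fin d₂) ℂ) (hρ₂ : IsDensity ρ₂) :
    cohWeight (ρ₁ ⊗ₖ ρ₂) ≤ cohWeight ρ₁ + cohWeight ρ₂ - cohWeight ρ₁ * cohWeight ρ₂ := by
  set S₁ := {s : ℝ | s ∈ Set.Icc (0 : ℝ) 1 ∧
    ∃ σ τ : Matrix (Fin d₁) (Fin d₁) ℂ,
      IsDensity σ ∧ IsIncoherent σ ∧ IsDensity τ ∧ ρ₁ = (1 - s) • σ + s • τ} with hS₁
  set S₂ := {s : ℝ | s ∈ Set.Icc (0 : ℝ) 1 ∧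
    ∃ σ τ : Matrix (Fin d₂) (Fin d₂) ℂ,
      IsDensity σ ∧ IsIncoherent σ ∧ IsDensity τ ∧ ρ₂ = (1 - s) • σ + s • τ} with hS₂
  have hne₁ : S₁.Nonempty := ⟨1, set_nonempty hρ₁⟩
  have hne₂ : S₂.Nonempty := ⟨1, set_nonempty hρ₂⟩
  have hbdd₁ : BddBelow S₁ := ⟨0, fun x hx => hx.1.1⟩
  have hbdd₂ : BddBelow S₂ := ⟨0, fun x hx => hx.1.1⟩
  have hbddT : BddBelow {s : ℝ | s ∈ Set.Icc (0 : ℝ) 1 ∧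
    ∃ σ τ : Matrix (Fin d₁ × Fin d₂) (Fin d₁ × Fin d₂) ℂ,
      IsDensity σ ∧ IsIncoherent σ ∧ IsDensity τ ∧
      ρ₁ ⊗ₖ ρ₂ = (1 - s) • σ + s • τ} := ⟨0, fun x hx => hx.1.1⟩
  have hc₁ : cohWeight ρ₁ = sInf S₁ := rfl
  have hc₂ : cohWeight ρ₂ = sInf S₂ := rfl
  have hc₁0 : 0 ≤ cohWeight ρ₁ := le_csInf hne₁ fun x hx => hx.1.1
  have hc₂0 : 0 ≤ cohWeight ρ₂ := le_csInf hne₂ fun x hx => hx.1.1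
  apply le_of_forall_pos_le_add
  intro ε hε
  obtain ⟨s₁, hs₁mem, hs₁lt⟩ := Real.lt_sInf_add_pos hne₁ (half_pos hε)
  obtain ⟨s₂, hs₂mem, hs₂lt⟩ := Real.lt_sInf_add_pos hne₂ (half_pos hε)
  have hle₁ : cohWeight ρ₁ ≤ s₁ := csInf_le hbdd₁ hs₁mem
  have hle₂ : cohWeight ρ₂ ≤ s₂ := csInf_le hbdd₂ hs₂mem
  have hkey : cohWeight (ρ₁ ⊗ₖ ρ₂) ≤ s₁ + s₂ - s₁ * s₂ :=
    csInf_le hbddT (mem_tensor hs₁mem hs₂mem)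
  rw [← hc₁] at hs₁lt
  rw [← hc₂] at hs₂lt
  nlinarith [mul_nonneg hc₁0 hc₂0, mul_le_mul hle₁ hle₂ hc₂0 (hc₁0.trans hle₁)]
end
end
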